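/- arXiv:1910.12950 — 6 statements merged into one kernel-verified Lean document; each statement's English description precedes it below -/
import Mathlib

section
/- In the graded tensor product A_q ⊗ A_q, the elements X = x⊗x, Ξ = x⊗ξ + ξ⊗x, Θ = x⊗θ + θ⊗x and Z = x⊗z + z⊗x satisfy X·Ξ = q Ξ·X, X·Θ = q Θ·X, and X·Z = Z·X. -/
/-!
STATEMENT 2: In the graded tensor product `A_q ⊗ A_q`, the elements `X = x⊗x`,
`Ξ = x⊗ξ + ξ⊗x`, `Θ = x⊗θ + θ⊗x` and `Z = x⊗z + z⊗x` satisfy `X·Ξ = q Ξ·X`,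
`X·Θ = q Θ·X`, and `X·Z = Z·X`.
Here `A_q ⊗ A_q` carries the graded multiplication
`(a⊗b)(c⊗d) = (−1)^{⟨deg b, deg c⟩} ac ⊗ bd` on homogeneous elements.
-/
open scoped TensorProduct

namespace DGQS

/-- The standard scalar product `⟨(a,b),(a',b')⟩ = aa' + bb'` on `ℤ₂ × ℤ₂`. -/
def pair2 (γ δ : ZMod 2 × ZMod 2) : ZMod 2 := γ.1 * δ.1 + γ.2 * δ.2

/-- The sign `(−1)^{⟨γ,δ⟩}`. -/
noncomputable def gsign (γ δ : ZMod 2 × ZMod 2) : ℂ := (-1 : ℂ) ^ (pair2 γ δ).val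

/-- The defining relations of the double-graded quantum superplane, imposed on the free
algebra on four generators `x = ι 0`, `ξ = ι 1`, `θ = ι 2`, `z = ι 3`:
`xξ = q ξx`, `xθ = q θx`, `xz = zx`, `ξ² = 0`, `θ² = 0`, `ξθ = θξ`,
`ξz = −q⁻¹ zξ`, `θz = −q⁻¹ zθ`. -/
inductive Rel (q : ℂ) : FreeAlgebra ℂ (Fin 4) → FreeAlgebra ℂ (Fin 4) → Prop
  | x_xi : Rel q (FreeAlgebra.ι ℂ (0 : Fin 4) * FreeAlgebra.ι ℂ (1 : Fin 4))
      (q • (FreeAlgebra.ι ℂ (1 : Fin 4) * FreeAlgebra.ι ℂ (0 : Fin 4)))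
  | x_th : Rel q (FreeAlgebra.ι ℂ (0 : Fin 4) * FreeAlgebra.ι ℂ (2 : Fin 4))
      (q • (FreeAlgebra.ι ℂ (2 : Fin 4) * FreeAlgebra.ι ℂ (0 : Fin 4)))
  | x_z : Rel q (FreeAlgebra.ι ℂ (0 : Fin 4) * FreeAlgebra.ι ℂ (3 : Fin 4))
      (FreeAlgebra.ι ℂ (3 : Fin 4) * FreeAlgebra.ι ℂ (0 : Fin 4))
  | xi_sq : Rel q (FreeAlgebra.ι ℂ (1 : Fin 4) * FreeAlgebra.ι ℂ (1 : Fin 4)) 0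
  | th_sq : Rel q (FreeAlgebra.ι ℂ (2 : Fin 4) * FreeAlgebra.ι ℂ (2 : Fin 4)) 0
  | xi_th : Rel q (FreeAlgebra.ι ℂ (1 : Fin 4) * FreeAlgebra.ι ℂ (2 : Fin 4))
      (FreeAlgebra.ι ℂ (2 : Fin 4) * FreeAlgebra.ι ℂ (1 : Fin 4))
  | xi_z : Rel q (FreeAlgebra.ι ℂ (1 : Fin 4) * FreeAlgebra.ι ℂ (3 : Fin 4))
      ((-q⁻¹) • (FreeAlgebra.ι ℂ (3 : Fin 4) * FreeAlgebra.ι ℂ (1 : Fin 4)))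
  | th_z : Rel q (FreeAlgebra.ι ℂ (2 : Fin 4) * FreeAlgebra.ι ℂ (3 : Fin 4))
      ((-q⁻¹) • (FreeAlgebra.ι ℂ (3 : Fin 4) * FreeAlgebra.ι ℂ (2 : Fin 4)))

/-- The algebra of polynomials on the double-graded quantum superplane `ℝ_q(1|𝟏)`. -/
abbrev Aq (q : ℂ) : Type := RingQuot (Rel q)

/-- The generators of `A_q`. -/
noncomputable def gen (q : ℂ) (i : Fin 4) : Aq q :=
  RingQuot.mkAlgHom ℂ (Rel q) (FreeAlgebra.ι ℂ i)

/-- The generator `x`, of degree `(0,0)`. -/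
noncomputable def X (q : ℂ) : Aq q := gen q 0
/-- The generator `ξ`, of degree `(0,1)`. -/
noncomputable def Xi (q : ℂ) : Aq q := gen q 1
/-- The generator `θ`, of degree `(1,0)`. -/
noncomputable def Th (q : ℂ) : Aq q := gen q 2
/-- The generator `z`, of degree `(1,1)`. -/
noncomputable def Zg (q : ℂ) : Aq q := gen q 3

/-- The `ℤ₂ × ℤ₂`-degrees of the generators. -/
def dg : Fin 4 → ZMod 2 × ZMod 2 := ![(0, 0), (0, 1), (1, 0), (1, 1)]

/-- The homogeneous component of degree `γ` of `A_q`: the span of the images of the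
words in the generators of total degree `γ`. -/
noncomputable def grading (q : ℂ) (γ : ZMod 2 × ZMod 2) : Submodule ℂ (Aq q) :=
  Submodule.span ℂ
    { a | ∃ w : List (Fin 4), (w.map dg).sum = γ ∧ a = (w.map (gen q)).prod }

end DGQS

namespace DGQS

lemma gen_mem (q : ℂ) (i : Fin 4) : gen q i ∈ grading q (dg i) := by
  apply Submodule.subset_span
  exact ⟨[i], by simp, by simp⟩

lemma x_mem (q : ℂ) : X q ∈ grading q (0, 0) := gen_mem q 0
lemma xi_mem (q : ℂ) : Xi q ∈ grading q (0, 1) := gen_mem q 1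
lemma th_mem (q : ℂ) : Th q ∈ grading q (1, 0) := gen_mem q 2
lemma z_mem (q : ℂ) : Zg q ∈ grading q (1, 1) := gen_mem q 3

lemma rel_eq {q : ℂ} {a b : FreeAlgebra ℂ (Fin 4)} (h : Rel q a b) :
    RingQuot.mkAlgHom ℂ (Rel q) a = RingQuot.mkAlgHom ℂ (Rel q) b :=
  RingQuot.mkAlgHom_rel ℂ h

lemma x_xi_comm (q : ℂ) : X q * Xi q = q • (Xi q * X q) := by
  have := rel_eq (Rel.x_xi (q := q))
  simpa [X, Xi, gen, map_mul, map_smul] using this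

lemma x_th_comm (q : ℂ) : X q * Th q = q • (Th q * X q) := by
  have := rel_eq (Rel.x_th (q := q))
  simpa [X, Th, gen, map_mul, map_smul] using this

lemma x_z_comm (q : ℂ) : X q * Zg q = Zg q * X q := by
  have := rel_eq (Rel.x_z (q := q))
  simpa [X, Zg, gen, map_mul] using this

lemma gsign_zero_left (δ : ZMod 2 × ZMod 2) : gsign (0, 0) δ = 1 := by
  simp [gsign, pair2]

lemma gsign_zero_right (γ : ZMod 2 × ZMod 2) : gsign γ (0, 0) = 1 := by
  simp [gsign, pair2]

end DGQS

open DGQS in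
theorem statement2 (q : ℂ) (hq : q ≠ 0) (hqroot : ∀ n : ℕ, 0 < n → q ^ n ≠ 1)
    (gmul : (Aq q ⊗[ℂ] Aq q) →ₗ[ℂ] (Aq q ⊗[ℂ] Aq q) →ₗ[ℂ] (Aq q ⊗[ℂ] Aq q))
    (hgmul : ∀ {γ δ : ZMod 2 × ZMod 2} {b c : Aq q},
      b ∈ grading q γ → c ∈ grading q δ → ∀ a d : Aq q,
        gmul (a ⊗ₜ[ℂ] b) (c ⊗ₜ[ℂ] d) = gsign γ δ • ((a * c) ⊗ₜ[ℂ] (b * d))) :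
    gmul (X q ⊗ₜ[ℂ] X q) (X q ⊗ₜ[ℂ] Xi q + Xi q ⊗ₜ[ℂ] X q)
        = q • gmul (X q ⊗ₜ[ℂ] Xi q + Xi q ⊗ₜ[ℂ] X q) (X q ⊗ₜ[ℂ] X q) ∧
    gmul (X q ⊗ₜ[ℂ] X q) (X q ⊗ₜ[ℂ] Th q + Th q ⊗ₜ[ℂ] X q)
        = q • gmul (X q ⊗ₜ[ℂ] Th q + Th q ⊗ₜ[ℂ] X q) (X q ⊗ₜ[ℂ] X q) ∧
    gmul (X q ⊗ₜ[ℂ] X q) (X q ⊗ₜ[ℂ] Zg q + Zg q ⊗ₜ[ℂ] X q)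
        = gmul (X q ⊗ₜ[ℂ] Zg q + Zg q ⊗ₜ[ℂ] X q) (X q ⊗ₜ[ℂ] X q) := by
  refine ⟨?_, ?_, ?_⟩
  · rw [map_add, map_add, LinearMap.add_apply,
      hgmul (x_mem q) (x_mem q), hgmul (x_mem q) (xi_mem q),
      hgmul (x_mem q) (x_mem q), hgmul (xi_mem q) (x_mem q),
      ]
    simp only [gsign_zero_left, gsign_zero_right, one_smul]
    rw [ x_xi_comm q,
      ]
    simp [TensorProduct.smul_tmul', smul_add]
  · rw [map_add, map_add, LinearMap.add_apply,
      hgmul (x_mem q) (x_mem q), hgmul (x_mem q) (th_mem q),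
      hgmul (x_mem q) (x_mem q), hgmul (th_mem q) (x_mem q),
      ]
    simp only [gsign_zero_left, gsign_zero_right, one_smul]
    rw [ x_th_comm q,
      ]
    simp [TensorProduct.smul_tmul', smul_add]
  · rw [map_add, map_add, LinearMap.add_apply,
      hgmul (x_mem q) (x_mem q), hgmul (x_mem q) (z_mem q),
      hgmul (x_mem q) (x_mem q), hgmul (z_mem q) (x_mem q),
      ]
    simp only [gsign_zero_left, gsign_zero_right, one_smul]
    rw [ x_z_comm q]
end

section
/- The algebra morphisms Δ : A_q → A_q ⊗ A_q and ε : A_q → ℂ determined by Δ(x) = x⊗x, Δ(ξ) = x⊗ξ + ξ⊗x, Δ(θ) = x⊗θ + θ⊗x, Δ(z) = x⊗z + z⊗x, ε(x) = 1, ε(ξ) = ε(θ) = ε(z) = 0 make A_q a cocommutative ℤ₂×ℤ₂-graded bialgebra: (Δ ⊗ Id)∘Δ = (Id ⊗ Δ)∘Δ, (ε ⊗ Id)∘Δ = Id = (Id ⊗ ε)∘Δ (under the identifications ℂ ⊗ A_q ≅ A_q ≅ A_q ⊗ ℂ), and σ∘Δ = Δ, where σ(a⊗b) = (−1)^{⟨deg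 a, deg b⟩} b⊗a. -/
/-!
STATEMENT 6: The algebra morphisms `Δ : A_q → A_q ⊗ A_q` and `ε : A_q → ℂ` determined by
`Δ(x) = x⊗x`, `Δ(ξ) = x⊗ξ + ξ⊗x`, `Δ(θ) = x⊗θ + θ⊗x`, `Δ(z) = x⊗z + z⊗x`, `ε(x) = 1`,
`ε(ξ) = ε(θ) = ε(z) = 0` make `A_q` a cocommutative `ℤ₂ × ℤ₂`-graded bialgebra:
`(Δ ⊗ Id)∘Δ = (Id ⊗ Δ)∘Δ`, `(ε ⊗ Id)∘Δ = Id = (Id ⊗ ε)∘Δ` (under the identifications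
`ℂ ⊗ A_q ≅ A_q ≅ A_q ⊗ ℂ`), and `σ∘Δ = Δ`, where `σ(a⊗b) = (−1)^{⟨deg a, deg b⟩} b⊗a`
on homogeneous elements.  The graded tensor product `A_q ⊗ A_q` carries the multiplication
`(a⊗b)(c⊗d) = (−1)^{⟨deg b, deg c⟩} ac ⊗ bd` on homogeneous elements, and `Δ`, `ε` are
assumed well defined as algebra morphisms.
-/
open scoped TensorProduct

namespace DGQSAux
open DGQS TensorProduct

variable {q : ℂ}

/-! ### Sign lemmas -/

lemma neg_one_pow_val_add (a b : ZMod 2) :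
    ((-1 : ℂ)) ^ ((a + b).val) = (-1) ^ a.val * (-1) ^ b.val := by
  have h : (a + b).val % 2 = (a.val + b.val) % 2 := by revert a b; decide
  rw [neg_one_pow_eq_pow_mod_two, h, ← neg_one_pow_eq_pow_mod_two, pow_add]

lemma gsign_add_left (α β δ : ZMod 2 × ZMod 2) :
    gsign (α + β) δ = gsign α δ * gsign β δ := by
  have h : pair2 (α + β) δ = pair2 α δ + pair2 β δ := by
    simp only [pair2, Prod.fst_add, Prod.snd_add]; ring
  rw [gsign, gsign, gsign, h, neg_one_pow_val_add]

lemma gsign_comm (γ δ : ZMod 2 × ZMod 2) : gsign γ δ = gsign δ γ := by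
  have h : pair2 γ δ = pair2 δ γ := by simp only [pair2]; ring
  rw [gsign, gsign, h]

lemma gsign_add_right (α β δ : ZMod 2 × ZMod 2) :
    gsign α (β + δ) = gsign α β * gsign α δ := by
  rw [gsign_comm, gsign_add_left, gsign_comm β α, gsign_comm δ α]

lemma gsign_zero_left (δ : ZMod 2 × ZMod 2) : gsign 0 δ = 1 := by
  have h : pair2 0 δ = 0 := by simp [pair2]
  rw [gsign, h, ZMod.val_zero, pow_zero]

lemma gsign_zero_right (γ : ZMod 2 × ZMod 2) : gsign γ 0 = 1 := by
  rw [gsign_comm, gsign_zero_left]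

lemma gsign_sq (γ δ : ZMod 2 × ZMod 2) : gsign γ δ * gsign γ δ = 1 := by
  rw [gsign, ← pow_add, ← two_mul, pow_mul]
  norm_num

/-! ### Words -/

noncomputable def pw (q : ℂ) (w : List (Fin 4)) : Aq q := (w.map (gen q)).prod

def degw (w : List (Fin 4)) : ZMod 2 × ZMod 2 := (w.map dg).sum

@[simp] lemma pw_nil : pw q [] = 1 := rfl

lemma pw_cons (i : Fin 4) (w : List (Fin 4)) : pw q (i :: w) = gen q i * pw q w := by
  simp [pw]

lemma pw_single (i : Fin 4) : pw q [i] = gen q i := by simp [pw]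

lemma pw_append (u v : List (Fin 4)) : pw q (u ++ v) = pw q u * pw q v := by
  simp [pw]

@[simp] lemma degw_nil : degw ([] : List (Fin 4)) = 0 := rfl

lemma degw_cons (i : Fin 4) (w : List (Fin 4)) : degw (i :: w) = dg i + degw w := by
  simp [degw]

lemma degw_append (u v : List (Fin 4)) : degw (u ++ v) = degw u + degw v := by
  simp [degw]

lemma pw_mem (w : List (Fin 4)) : pw q w ∈ grading q (degw w) :=
  Submodule.subset_span ⟨w, rfl, rfl⟩

lemma gen_mem (i : Fin 4) : gen q i ∈ grading q (dg i) := by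
  have h := pw_mem (q := q) [i]
  rw [pw_single] at h
  simpa [degw_cons] using h

lemma one_mem0 : (1 : Aq q) ∈ grading q 0 := pw_mem (q := q) []

lemma X_grade : X q ∈ grading q 0 := by
  have h : dg 0 = 0 := by decide
  exact h ▸ gen_mem 0

lemma Xmul (w : List (Fin 4)) : X q * pw q w = pw q (0 :: w) := (pw_cons 0 w).symm

lemma genmul (i : Fin 4) (w : List (Fin 4)) : gen q i * pw q w = pw q (i :: w) :=
  (pw_cons i w).symm

lemma degw_zero_cons (w : List (Fin 4)) : degw (0 :: w) = degw w := by
  rw [degw_cons, show dg 0 = 0 by decide, zero_add]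

/-! ### Spanning -/

lemma mul_mem_spanW {a b : Aq q} (ha : a ∈ Submodule.span ℂ (Set.range (pw q)))
    (hb : b ∈ Submodule.span ℂ (Set.range (pw q))) :
    a * b ∈ Submodule.span ℂ (Set.range (pw q)) := by
  induction ha using Submodule.span_induction with
  | mem x hx =>
    obtain ⟨u, rfl⟩ := hx
    induction hb using Submodule.span_induction with
    | mem y hy =>
      obtain ⟨v, rfl⟩ := hy
      rw [← pw_append]
      exact Submodule.subset_span ⟨u ++ v, rfl⟩
    | zero => simp
    | add y z _ _ hy hz => rw [mul_add]; exact add_mem hy hz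
    | smul c y _ hy => rw [mul_smul_comm]; exact Submodule.smul_mem _ _ hy
  | zero => simp
  | add x y _ _ hx hy => rw [add_mul]; exact add_mem hx hy
  | smul c x _ hx => rw [smul_mul_assoc]; exact Submodule.smul_mem _ _ hx

lemma span_top : Submodule.span ℂ (Set.range (pw q)) = ⊤ := by
  rw [eq_top_iff]
  rintro a -
  obtain ⟨f, rfl⟩ := RingQuot.mkAlgHom_surjective ℂ (Rel q) a
  refine FreeAlgebra.induction ℂ (Fin 4)
    (motive := fun f => RingQuot.mkAlgHom ℂ (Rel q) f ∈ Submodule.span ℂ (Set.range (pw q)))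
    ?_ ?_ ?_ ?_ f
  · intro r
    rw [AlgHom.commutes, Algebra.algebraMap_eq_smul_one]
    exact Submodule.smul_mem _ _ (Submodule.subset_span ⟨[], rfl⟩)
  · intro i
    exact Submodule.subset_span ⟨[i], pw_single i⟩
  · intro a b ha hb
    rw [map_mul]
    exact mul_mem_spanW ha hb
  · intro a b ha hb
    rw [map_add]
    exact add_mem ha hb

lemma ext_words {M : Type*} [AddCommMonoid M] [Module ℂ M] {F G : Aq q →ₗ[ℂ] M}
    (h : ∀ w, F (pw q w) = G (pw q w)) : F = G := by
  apply LinearMap.ext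
  intro a
  have ha : a ∈ Submodule.span ℂ (Set.range (pw q)) := by
    rw [span_top]; exact Submodule.mem_top
  induction ha using Submodule.span_induction with
  | mem x hx => obtain ⟨w, rfl⟩ := hx; exact h w
  | zero => simp
  | add x y _ _ hx hy => simp only [map_add, hx, hy]
  | smul c x _ hx => simp only [map_smul, hx]

/-! ### The setup bundling all hypotheses -/

structure Setup (q : ℂ) where
  gmul : (Aq q ⊗[ℂ] Aq q) →ₗ[ℂ] (Aq q ⊗[ℂ] Aq q) →ₗ[ℂ] (Aq q ⊗[ℂ] Aq q)
  hgmul : ∀ {γ δ : ZMod 2 × ZMod 2} {b c : Aq q},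
      b ∈ grading q γ → c ∈ grading q δ → ∀ a d : Aq q,
        gmul (a ⊗ₜ[ℂ] b) (c ⊗ₜ[ℂ] d) = gsign γ δ • ((a * c) ⊗ₜ[ℂ] (b * d))
  Δ : Aq q →ₗ[ℂ] Aq q ⊗[ℂ] Aq q
  hΔone : Δ 1 = 1 ⊗ₜ[ℂ] 1
  hΔmul : ∀ a b : Aq q, Δ (a * b) = gmul (Δ a) (Δ b)
  hΔx : Δ (X q) = X q ⊗ₜ[ℂ] X q
  hΔξ : Δ (Xi q) = X q ⊗ₜ[ℂ] Xi q + Xi q ⊗ₜ[ℂ] X q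
  hΔθ : Δ (Th q) = X q ⊗ₜ[ℂ] Th q + Th q ⊗ₜ[ℂ] X q
  hΔz : Δ (Zg q) = X q ⊗ₜ[ℂ] Zg q + Zg q ⊗ₜ[ℂ] X q
  ε : Aq q →ₐ[ℂ] ℂ
  hεx : ε (X q) = 1
  hεξ : ε (Xi q) = 0
  hεθ : ε (Th q) = 0
  hεz : ε (Zg q) = 0
  σ : Aq q ⊗[ℂ] Aq q →ₗ[ℂ] Aq q ⊗[ℂ] Aq q
  hσ : ∀ {γ δ : ZMod 2 × ZMod 2} {a b : Aq q},
      a ∈ grading q γ → b ∈ grading q δ → σ (a ⊗ₜ[ℂ] b) = gsign γ δ • (b ⊗ₜ[ℂ] a)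

variable (S : Setup q)

def Sset (q : ℂ) (γ : ZMod 2 × ZMod 2) : Set (Aq q ⊗[ℂ] Aq q) :=
  {t | ∃ u v : List (Fin 4), degw u + degw v = γ ∧ t = pw q u ⊗ₜ[ℂ] pw q v}

lemma gmul_word (u v s t : List (Fin 4)) :
    S.gmul (pw q u ⊗ₜ[ℂ] pw q v) (pw q s ⊗ₜ[ℂ] pw q t)
      = gsign (degw v) (degw s) • (pw q (u ++ s) ⊗ₜ[ℂ] pw q (v ++ t)) := by
  rw [S.hgmul (pw_mem v) (pw_mem s), pw_append, pw_append]

lemma gmul_mem {α β : ZMod 2 × ZMod 2} {t₁ t₂ : Aq q ⊗[ℂ] Aq q}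
    (h₁ : t₁ ∈ Submodule.span ℂ (Sset q α)) (h₂ : t₂ ∈ Submodule.span ℂ (Sset q β)) :
    S.gmul t₁ t₂ ∈ Submodule.span ℂ (Sset q (α + β)) := by
  induction h₁ using Submodule.span_induction with
  | mem x hx =>
    obtain ⟨u, v, huv, rfl⟩ := hx
    induction h₂ using Submodule.span_induction with
    | mem y hy =>
      obtain ⟨s, t, hst, rfl⟩ := hy
      rw [gmul_word]
      refine Submodule.smul_mem _ _ (Submodule.subset_span ⟨u ++ s, v ++ t, ?_, rfl⟩)
      rw [degw_append, degw_append, ← huv, ← hst]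
      abel
    | zero => simp only [map_zero]; exact zero_mem _
    | add y z _ _ hy hz => rw [map_add]; exact add_mem hy hz
    | smul c y _ hy => rw [map_smul]; exact Submodule.smul_mem _ _ hy
  | zero => simp only [map_zero, LinearMap.zero_apply]; exact zero_mem _
  | add x y _ _ hx hy => rw [map_add, LinearMap.add_apply]; exact add_mem hx hy
  | smul c x _ hx => rw [map_smul, LinearMap.smul_apply]; exact Submodule.smul_mem _ _ hx

lemma delta_gen_mem (i : Fin 4) : S.Δ (gen q i) ∈ Submodule.span ℂ (Sset q (dg i)) := by
  have m0 : X q = pw q [0] := (pw_single 0).symm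
  have m1 : Xi q = pw q [1] := (pw_single 1).symm
  have m2 : Th q = pw q [2] := (pw_single 2).symm
  have m3 : Zg q = pw q [3] := (pw_single 3).symm
  fin_cases i
  · show S.Δ (gen q 0) ∈ Submodule.span ℂ (Sset q (dg 0))
    rw [show S.Δ (gen q 0) = X q ⊗ₜ[ℂ] X q from S.hΔx, m0]
    exact Submodule.subset_span ⟨[0], [0], by decide, rfl⟩
  · show S.Δ (gen q 1) ∈ Submodule.span ℂ (Sset q (dg 1))
    rw [show S.Δ (gen q 1) = X q ⊗ₜ[ℂ] Xi q + Xi q ⊗ₜ[ℂ] X q from S.hΔξ, m0, m1]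
    exact add_mem (Submodule.subset_span ⟨[0], [1], by decide, rfl⟩)
      (Submodule.subset_span ⟨[1], [0], by decide, rfl⟩)
  · show S.Δ (gen q 2) ∈ Submodule.span ℂ (Sset q (dg 2))
    rw [show S.Δ (gen q 2) = X q ⊗ₜ[ℂ] Th q + Th q ⊗ₜ[ℂ] X q from S.hΔθ, m0, m2]
    exact add_mem (Submodule.subset_span ⟨[0], [2], by decide, rfl⟩)
      (Submodule.subset_span ⟨[2], [0], by decide, rfl⟩)
  · show S.Δ (gen q 3) ∈ Submodule.span ℂ (Sset q (dg 3))
    rw [show S.Δ (gen q 3) = X q ⊗ₜ[ℂ] Zg q + Zg q ⊗ₜ[ℂ] X q from S.hΔz, m0, m3]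
    exact add_mem (Submodule.subset_span ⟨[0], [3], by decide, rfl⟩)
      (Submodule.subset_span ⟨[3], [0], by decide, rfl⟩)

lemma delta_word (w : List (Fin 4)) :
    S.Δ (pw q w) ∈ Submodule.span ℂ (Sset q (degw w)) := by
  induction w with
  | nil =>
    rw [pw_nil, S.hΔone]
    exact Submodule.subset_span ⟨[], [], by decide, rfl⟩
  | cons i w ih =>
    rw [pw_cons, S.hΔmul, degw_cons]
    exact gmul_mem S (delta_gen_mem S i) ih

end DGQSAux

namespace DGQSAux
open DGQS TensorProduct

variable {q : ℂ} (S : Setup q)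

/-! ### Counit -/

noncomputable def Emap (q : ℂ) (ε : Aq q →ₐ[ℂ] ℂ) : Aq q ⊗[ℂ] Aq q →ₗ[ℂ] Aq q :=
  (TensorProduct.lid ℂ (Aq q)).toLinearMap ∘ₗ TensorProduct.map ε.toLinearMap LinearMap.id

noncomputable def Emap' (q : ℂ) (ε : Aq q →ₐ[ℂ] ℂ) : Aq q ⊗[ℂ] Aq q →ₗ[ℂ] Aq q :=
  (TensorProduct.rid ℂ (Aq q)).toLinearMap ∘ₗ TensorProduct.map LinearMap.id ε.toLinearMap

@[simp] lemma Emap_tmul (ε : Aq q →ₐ[ℂ] ℂ) (a b : Aq q) :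
    Emap q ε (a ⊗ₜ[ℂ] b) = ε a • b := by
  simp [Emap]

@[simp] lemma Emap'_tmul (ε : Aq q →ₐ[ℂ] ℂ) (a b : Aq q) :
    Emap' q ε (a ⊗ₜ[ℂ] b) = ε b • a := by
  simp [Emap']

lemma eps_word (c : List (Fin 4)) : S.ε (pw q c) = 0 ∨ degw c = 0 := by
  by_cases h : ∀ j ∈ c, j = (0 : Fin 4)
  · right
    rw [degw]
    apply List.sum_eq_zero
    intro x hx
    obtain ⟨j, hj, rfl⟩ := List.mem_map.mp hx
    rw [h j hj]
    decide
  · left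
    push_neg at h
    obtain ⟨j, hj, hj0⟩ := h
    have hgen : S.ε (gen q j) = 0 := by
      fin_cases j
      · exact absurd rfl hj0
      · exact S.hεξ
      · exact S.hεθ
      · exact S.hεz
    rw [pw, map_list_prod]
    apply List.prod_eq_zero
    rw [List.map_map]
    exact List.mem_map.mpr ⟨j, hj, hgen⟩

lemma Emap_gmul {α β : ZMod 2 × ZMod 2} {t₁ t₂ : Aq q ⊗[ℂ] Aq q}
    (h₁ : t₁ ∈ Submodule.span ℂ (Sset q α)) (h₂ : t₂ ∈ Submodule.span ℂ (Sset q β)) :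
    Emap q S.ε (S.gmul t₁ t₂) = Emap q S.ε t₁ * Emap q S.ε t₂ := by
  induction h₁ using Submodule.span_induction with
  | mem x hx =>
    obtain ⟨u, v, -, rfl⟩ := hx
    induction h₂ using Submodule.span_induction with
    | mem y hy =>
      obtain ⟨s, t, -, rfl⟩ := hy
      rw [gmul_word, map_smul, Emap_tmul, Emap_tmul, Emap_tmul, pw_append, pw_append,
        map_mul]
      rcases eps_word S s with h | h
      · simp [h]
      · rw [h, gsign_zero_right, one_smul, smul_mul_smul_comm]
    | zero => simp
    | add y z _ _ hy hz => simp only [map_add, hy, hz, mul_add]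
    | smul c y _ hy => simp only [map_smul, hy, mul_smul_comm]
  | zero => simp
  | add x y _ _ hx hy => simp only [map_add, LinearMap.add_apply, hx, hy, add_mul]
  | smul c x _ hx => simp only [map_smul, LinearMap.smul_apply, hx, smul_mul_assoc]

lemma Emap'_gmul {α β : ZMod 2 × ZMod 2} {t₁ t₂ : Aq q ⊗[ℂ] Aq q}
    (h₁ : t₁ ∈ Submodule.span ℂ (Sset q α)) (h₂ : t₂ ∈ Submodule.span ℂ (Sset q β)) :
    Emap' q S.ε (S.gmul t₁ t₂) = Emap' q S.ε t₁ * Emap' q S.ε t₂ := by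
  induction h₁ using Submodule.span_induction with
  | mem x hx =>
    obtain ⟨u, v, -, rfl⟩ := hx
    induction h₂ using Submodule.span_induction with
    | mem y hy =>
      obtain ⟨s, t, -, rfl⟩ := hy
      rw [gmul_word, map_smul, Emap'_tmul, Emap'_tmul, Emap'_tmul, pw_append, pw_append,
        map_mul]
      rcases eps_word S v with h | h
      · simp [h]
      · rw [h, gsign_zero_left, one_smul, smul_mul_smul_comm]
    | zero => simp
    | add y z _ _ hy hz => simp only [map_add, hy, hz, mul_add]
    | smul c y _ hy => simp only [map_smul, hy, mul_smul_comm]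
  | zero => simp
  | add x y _ _ hx hy => simp only [map_add, LinearMap.add_apply, hx, hy, add_mul]
  | smul c x _ hx => simp only [map_smul, LinearMap.smul_apply, hx, smul_mul_assoc]

lemma Emap_delta_gen (i : Fin 4) : Emap q S.ε (S.Δ (gen q i)) = gen q i := by
  fin_cases i
  · show Emap q S.ε (S.Δ (X q)) = X q
    rw [S.hΔx, Emap_tmul, S.hεx, one_smul]
  · show Emap q S.ε (S.Δ (Xi q)) = Xi q
    rw [S.hΔξ, map_add, Emap_tmul, Emap_tmul, S.hεx, S.hεξ, one_smul, zero_smul, add_zero]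
  · show Emap q S.ε (S.Δ (Th q)) = Th q
    rw [S.hΔθ, map_add, Emap_tmul, Emap_tmul, S.hεx, S.hεθ, one_smul, zero_smul, add_zero]
  · show Emap q S.ε (S.Δ (Zg q)) = Zg q
    rw [S.hΔz, map_add, Emap_tmul, Emap_tmul, S.hεx, S.hεz, one_smul, zero_smul, add_zero]

lemma Emap'_delta_gen (i : Fin 4) : Emap' q S.ε (S.Δ (gen q i)) = gen q i := by
  fin_cases i
  · show Emap' q S.ε (S.Δ (X q)) = X q
    rw [S.hΔx, Emap'_tmul, S.hεx, one_smul]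
  · show Emap' q S.ε (S.Δ (Xi q)) = Xi q
    rw [S.hΔξ, map_add, Emap'_tmul, Emap'_tmul, S.hεx, S.hεξ, one_smul, zero_smul, zero_add]
  · show Emap' q S.ε (S.Δ (Th q)) = Th q
    rw [S.hΔθ, map_add, Emap'_tmul, Emap'_tmul, S.hεx, S.hεθ, one_smul, zero_smul, zero_add]
  · show Emap' q S.ε (S.Δ (Zg q)) = Zg q
    rw [S.hΔz, map_add, Emap'_tmul, Emap'_tmul, S.hεx, S.hεz, one_smul, zero_smul, zero_add]

lemma counit_left (w : List (Fin 4)) : Emap q S.ε (S.Δ (pw q w)) = pw q w := by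
  induction w with
  | nil => rw [pw_nil, S.hΔone, Emap_tmul, map_one, one_smul]
  | cons i w ih =>
    rw [pw_cons, S.hΔmul, Emap_gmul S (delta_gen_mem S i) (delta_word S w),
      Emap_delta_gen, ih]

lemma counit_right (w : List (Fin 4)) : Emap' q S.ε (S.Δ (pw q w)) = pw q w := by
  induction w with
  | nil => rw [pw_nil, S.hΔone, Emap'_tmul, map_one, one_smul]
  | cons i w ih =>
    rw [pw_cons, S.hΔmul, Emap'_gmul S (delta_gen_mem S i) (delta_word S w),
      Emap'_delta_gen, ih]

/-! ### Cocommutativity -/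

lemma sigma_word (u v : List (Fin 4)) :
    S.σ (pw q u ⊗ₜ[ℂ] pw q v) = gsign (degw u) (degw v) • (pw q v ⊗ₜ[ℂ] pw q u) :=
  S.hσ (pw_mem u) (pw_mem v)

lemma sign_identity (a b c d : ZMod 2 × ZMod 2) :
    gsign b c * gsign (a + c) (b + d) = gsign a b * (gsign c d * gsign a d) := by
  rw [gsign_add_left, gsign_add_right, gsign_add_right, gsign_comm c b]
  linear_combination (gsign a b * gsign a d * gsign c d) * gsign_sq b c

lemma sigma_gmul {α β : ZMod 2 × ZMod 2} {t₁ t₂ : Aq q ⊗[ℂ] Aq q}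
    (h₁ : t₁ ∈ Submodule.span ℂ (Sset q α)) (h₂ : t₂ ∈ Submodule.span ℂ (Sset q β)) :
    S.σ (S.gmul t₁ t₂) = S.gmul (S.σ t₁) (S.σ t₂) := by
  induction h₁ using Submodule.span_induction with
  | mem x hx =>
    obtain ⟨u, v, -, rfl⟩ := hx
    induction h₂ using Submodule.span_induction with
    | mem y hy =>
      obtain ⟨s, t, -, rfl⟩ := hy
      rw [gmul_word, map_smul, sigma_word, sigma_word, sigma_word, degw_append, degw_append]
      simp only [map_smul, LinearMap.smul_apply, gmul_word S, smul_smul]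
      rw [sign_identity]
      congr 1
      ring
    | zero => simp
    | add y z _ _ hy hz => simp only [map_add, hy, hz]
    | smul c y _ hy => simp only [map_smul, hy]
  | zero => simp
  | add x y _ _ hx hy => simp only [map_add, LinearMap.add_apply, hx, hy]
  | smul c x _ hx => simp only [map_smul, LinearMap.smul_apply, hx]

lemma sigma_delta_gen (i : Fin 4) : S.σ (S.Δ (gen q i)) = S.Δ (gen q i) := by
  have hXi : Xi q ∈ grading q ((0 : ZMod 2), (1 : ZMod 2)) := by
    have h : dg 1 = ((0 : ZMod 2), (1 : ZMod 2)) := by decide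
    exact h ▸ gen_mem 1
  have hTh : Th q ∈ grading q ((1 : ZMod 2), (0 : ZMod 2)) := by
    have h : dg 2 = ((1 : ZMod 2), (0 : ZMod 2)) := by decide
    exact h ▸ gen_mem 2
  have hZg : Zg q ∈ grading q ((1 : ZMod 2), (1 : ZMod 2)) := by
    have h : dg 3 = ((1 : ZMod 2), (1 : ZMod 2)) := by decide
    exact h ▸ gen_mem 3
  fin_cases i
  · show S.σ (S.Δ (X q)) = S.Δ (X q)
    rw [S.hΔx, S.hσ X_grade X_grade, gsign_zero_left, one_smul]
  · show S.σ (S.Δ (Xi q)) = S.Δ (Xi q)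
    rw [S.hΔξ, map_add, S.hσ X_grade hXi, S.hσ hXi X_grade, gsign_zero_left,
      gsign_zero_right, one_smul, one_smul, add_comm]
  · show S.σ (S.Δ (Th q)) = S.Δ (Th q)
    rw [S.hΔθ, map_add, S.hσ X_grade hTh, S.hσ hTh X_grade, gsign_zero_left,
      gsign_zero_right, one_smul, one_smul, add_comm]
  · show S.σ (S.Δ (Zg q)) = S.Δ (Zg q)
    rw [S.hΔz, map_add, S.hσ X_grade hZg, S.hσ hZg X_grade, gsign_zero_left,
      gsign_zero_right, one_smul, one_smul, add_comm]

lemma cocomm_word (w : List (Fin 4)) : S.σ (S.Δ (pw q w)) = S.Δ (pw q w) := by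
  induction w with
  | nil =>
    rw [pw_nil, S.hΔone, S.hσ one_mem0 one_mem0, gsign_zero_left, one_smul]
  | cons i w ih =>
    rw [pw_cons, S.hΔmul, sigma_gmul S (delta_gen_mem S i) (delta_word S w),
      sigma_delta_gen, ih]

end DGQSAux

namespace DGQSAux
open DGQS TensorProduct

set_option maxHeartbeats 1000000
set_option synthInstance.maxHeartbeats 400000

variable {q : ℂ} (S : Setup q)

/-! ### Coassociativity -/

noncomputable def A3 (q : ℂ) :
    (Aq q ⊗[ℂ] Aq q) ⊗[ℂ] Aq q →ₗ[ℂ] Aq q ⊗[ℂ] (Aq q ⊗[ℂ] Aq q) :=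
  (TensorProduct.assoc ℂ (Aq q) (Aq q) (Aq q)).toLinearMap

noncomputable def A3' (q : ℂ) :
    Aq q ⊗[ℂ] (Aq q ⊗[ℂ] Aq q) →ₗ[ℂ] (Aq q ⊗[ℂ] Aq q) ⊗[ℂ] Aq q :=
  ((TensorProduct.assoc ℂ (Aq q) (Aq q) (Aq q)).symm).toLinearMap

@[simp] lemma A3_tmul (a b c : Aq q) :
    A3 q ((a ⊗ₜ[ℂ] b) ⊗ₜ[ℂ] c) = a ⊗ₜ[ℂ] (b ⊗ₜ[ℂ] c) := by simp [A3]

@[simp] lemma A3'_tmul (a b c : Aq q) :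
    A3' q (a ⊗ₜ[ℂ] (b ⊗ₜ[ℂ] c)) = (a ⊗ₜ[ℂ] b) ⊗ₜ[ℂ] c := by simp [A3']

noncomputable def Phi (S : Setup q) (g : Aq q) :
    Aq q ⊗[ℂ] (Aq q ⊗[ℂ] Aq q) →ₗ[ℂ] Aq q ⊗[ℂ] (Aq q ⊗[ℂ] Aq q) :=
  (TensorProduct.map LinearMap.id S.σ) ∘ₗ A3 q ∘ₗ
      (TensorProduct.map (S.gmul (X q ⊗ₜ[ℂ] g)) (LinearMap.mulLeft ℂ (X q))) ∘ₗ A3' q ∘ₗ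
      (TensorProduct.map LinearMap.id S.σ)
  + A3 q ∘ₗ (TensorProduct.map (S.gmul (X q ⊗ₜ[ℂ] g)) (LinearMap.mulLeft ℂ (X q))) ∘ₗ A3' q
  + TensorProduct.map (LinearMap.mulLeft ℂ g)
      (TensorProduct.map (LinearMap.mulLeft ℂ (X q)) (LinearMap.mulLeft ℂ (X q)))

noncomputable def Phi0 (q : ℂ) :
    Aq q ⊗[ℂ] (Aq q ⊗[ℂ] Aq q) →ₗ[ℂ] Aq q ⊗[ℂ] (Aq q ⊗[ℂ] Aq q) :=
  TensorProduct.map (LinearMap.mulLeft ℂ (X q))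
    (TensorProduct.map (LinearMap.mulLeft ℂ (X q)) (LinearMap.mulLeft ℂ (X q)))

lemma phi_sign (γ a b c : ZMod 2 × ZMod 2) :
    gsign b c * (gsign γ a * gsign (γ + c) b) = gsign γ a * gsign γ b := by
  rw [gsign_add_left, gsign_comm b c]
  linear_combination (gsign γ a * gsign γ b) * gsign_sq c b

lemma Phi_eval (i : Fin 4) (A B C : List (Fin 4)) :
    Phi S (gen q i) (pw q A ⊗ₜ[ℂ] (pw q B ⊗ₜ[ℂ] pw q C))
      = (gsign (dg i) (degw A) * gsign (dg i) (degw B)) •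
            (pw q (0::A) ⊗ₜ[ℂ] (pw q (0::B) ⊗ₜ[ℂ] pw q (i::C)))
        + gsign (dg i) (degw A) • (pw q (0::A) ⊗ₜ[ℂ] (pw q (i::B) ⊗ₜ[ℂ] pw q (0::C)))
        + pw q (i::A) ⊗ₜ[ℂ] (pw q (0::B) ⊗ₜ[ℂ] pw q (0::C)) := by
  have h3 : (TensorProduct.map (LinearMap.mulLeft ℂ (gen q i))
      (TensorProduct.map (LinearMap.mulLeft ℂ (X q)) (LinearMap.mulLeft ℂ (X q))))
      (pw q A ⊗ₜ[ℂ] (pw q B ⊗ₜ[ℂ] pw q C))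
      = pw q (i::A) ⊗ₜ[ℂ] (pw q (0::B) ⊗ₜ[ℂ] pw q (0::C)) := by
    rw [map_tmul, map_tmul]
    simp only [LinearMap.mulLeft_apply, Xmul, genmul]
  have h2 : (A3 q ∘ₗ (TensorProduct.map (S.gmul (X q ⊗ₜ[ℂ] gen q i))
      (LinearMap.mulLeft ℂ (X q))) ∘ₗ A3' q) (pw q A ⊗ₜ[ℂ] (pw q B ⊗ₜ[ℂ] pw q C))
      = gsign (dg i) (degw A) • (pw q (0::A) ⊗ₜ[ℂ] (pw q (i::B) ⊗ₜ[ℂ] pw q (0::C))) := by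
    rw [LinearMap.comp_apply, LinearMap.comp_apply, A3'_tmul, map_tmul,
      LinearMap.mulLeft_apply, S.hgmul (gen_mem i) (pw_mem A)]
    simp only [Xmul, genmul, ← smul_tmul', map_smul, A3_tmul]
  have h1 : ((TensorProduct.map LinearMap.id S.σ) ∘ₗ A3 q ∘ₗ
      (TensorProduct.map (S.gmul (X q ⊗ₜ[ℂ] gen q i)) (LinearMap.mulLeft ℂ (X q))) ∘ₗ
      A3' q ∘ₗ (TensorProduct.map LinearMap.id S.σ)) (pw q A ⊗ₜ[ℂ] (pw q B ⊗ₜ[ℂ] pw q C))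
      = (gsign (dg i) (degw A) * gsign (dg i) (degw B)) •
          (pw q (0::A) ⊗ₜ[ℂ] (pw q (0::B) ⊗ₜ[ℂ] pw q (i::C))) := by
    rw [LinearMap.comp_apply, LinearMap.comp_apply, LinearMap.comp_apply,
      LinearMap.comp_apply, map_tmul]
    simp only [LinearMap.id_coe, id_eq]
    rw [sigma_word, tmul_smul, map_smul, A3'_tmul, map_smul, map_tmul,
      LinearMap.mulLeft_apply, S.hgmul (gen_mem i) (pw_mem A)]
    simp only [Xmul, genmul, ← smul_tmul', tmul_smul, map_smul, A3_tmul, map_tmul,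
      LinearMap.id_coe, id_eq, smul_smul]
    rw [sigma_word, degw_cons i C, degw_zero_cons, tmul_smul, smul_smul, mul_assoc,
      phi_sign]
  rw [Phi, LinearMap.add_apply, LinearMap.add_apply, h1, h2, h3]

lemma K1 (i : Fin 4)
    (hi : S.Δ (gen q i) = X q ⊗ₜ[ℂ] gen q i + gen q i ⊗ₜ[ℂ] X q)
    {δ : ZMod 2 × ZMod 2} {t : Aq q ⊗[ℂ] Aq q}
    (ht : t ∈ Submodule.span ℂ (Sset q δ)) :
    TensorProduct.map LinearMap.id S.Δ (S.gmul (S.Δ (gen q i)) t)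
      = Phi S (gen q i) (TensorProduct.map LinearMap.id S.Δ t) := by
  induction ht using Submodule.span_induction with
  | mem x hx =>
    obtain ⟨u, v, -, rfl⟩ := hx
    have inner : ∀ s, s ∈ Submodule.span ℂ (Sset q (degw v)) →
        gsign (dg i) (degw u) • (pw q (0::u) ⊗ₜ[ℂ] S.gmul (S.Δ (gen q i)) s)
          + pw q (i::u) ⊗ₜ[ℂ] S.gmul (X q ⊗ₜ[ℂ] X q) s
          = Phi S (gen q i) (pw q u ⊗ₜ[ℂ] s) := by
      intro s hs
      induction hs using Submodule.span_induction with
      | mem y hy =>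
        obtain ⟨a, b, -, rfl⟩ := hy
        rw [hi, map_add, LinearMap.add_apply,
          S.hgmul (gen_mem i) (pw_mem a) (X q) (pw q b),
          S.hgmul X_grade (pw_mem a) (gen q i) (pw q b),
          S.hgmul X_grade (pw_mem a) (X q) (pw q b),
          gsign_zero_left, one_smul, one_smul]
        simp only [Xmul, genmul, tmul_add, tmul_smul, map_add, map_smul]
        rw [Phi_eval]
        module
      | zero => simp
      | add y z hy' hz' hy hz =>
        simp only [map_add, tmul_add, smul_add]
        rw [← hy, ← hz]
        abel
      | smul c y hy' hy =>
        simp only [map_smul, tmul_smul]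
        rw [← hy]
        module
    rw [map_tmul, hi, map_add, LinearMap.add_apply,
      S.hgmul (gen_mem i) (pw_mem u) (X q) (pw q v),
      S.hgmul X_grade (pw_mem u) (gen q i) (pw q v),
      gsign_zero_left, one_smul]
    simp only [map_add, map_smul, map_tmul, LinearMap.id_coe, id_eq]
    rw [S.hΔmul (gen q i) (pw q v), S.hΔmul (X q) (pw q v), S.hΔx]
    simp only [Xmul, genmul]
    exact inner (S.Δ (pw q v)) (delta_word S v)
  | zero => simp
  | add x y hx' hy' hx hy =>
    simp only [map_add]
    rw [hx, hy]
  | smul c x hx' hx =>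
    simp only [map_smul]
    rw [hx]

lemma K2 (i : Fin 4)
    (hi : S.Δ (gen q i) = X q ⊗ₜ[ℂ] gen q i + gen q i ⊗ₜ[ℂ] X q)
    {δ : ZMod 2 × ZMod 2} {t : Aq q ⊗[ℂ] Aq q}
    (ht : t ∈ Submodule.span ℂ (Sset q δ)) :
    A3 q (TensorProduct.map S.Δ LinearMap.id (S.gmul (S.Δ (gen q i)) t))
      = Phi S (gen q i) (A3 q (TensorProduct.map S.Δ LinearMap.id t)) := by
  induction ht using Submodule.span_induction with
  | mem x hx =>
    obtain ⟨u, v, -, rfl⟩ := hx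
    have inner : ∀ s, s ∈ Submodule.span ℂ (Sset q (degw u)) →
        gsign (dg i) (degw u) • A3 q (S.gmul (X q ⊗ₜ[ℂ] X q) s ⊗ₜ[ℂ] pw q (i::v))
          + A3 q (S.gmul (S.Δ (gen q i)) s ⊗ₜ[ℂ] pw q (0::v))
          = Phi S (gen q i) (A3 q (s ⊗ₜ[ℂ] pw q v)) := by
      intro s hs
      induction hs using Submodule.span_induction with
      | mem y hy =>
        obtain ⟨a, b, hab, rfl⟩ := hy
        rw [hi, map_add, LinearMap.add_apply,
          S.hgmul (gen_mem i) (pw_mem a) (X q) (pw q b),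
          S.hgmul X_grade (pw_mem a) (gen q i) (pw q b),
          S.hgmul X_grade (pw_mem a) (X q) (pw q b),
          gsign_zero_left, one_smul, one_smul]
        simp only [Xmul, genmul, add_tmul, ← smul_tmul', map_add, map_smul, A3_tmul]
        rw [Phi_eval, ← hab, gsign_add_right]
        module
      | zero => simp
      | add y z hy' hz' hy hz =>
        simp only [map_add, add_tmul, smul_add]
        rw [← hy, ← hz]
        abel
      | smul c y hy' hy =>
        simp only [map_smul, ← smul_tmul', smul_smul]
        rw [← hy]
        module
    rw [map_tmul, hi, map_add, LinearMap.add_apply,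
      S.hgmul (gen_mem i) (pw_mem u) (X q) (pw q v),
      S.hgmul X_grade (pw_mem u) (gen q i) (pw q v),
      gsign_zero_left, one_smul]
    simp only [map_add, map_smul, ← smul_tmul', add_tmul, map_tmul, LinearMap.id_coe, id_eq]
    rw [S.hΔmul (X q) (pw q u), S.hΔmul (gen q i) (pw q u), S.hΔx]
    simp only [Xmul, genmul]
    exact inner (S.Δ (pw q u)) (delta_word S u)
  | zero => simp
  | add x y hx' hy' hx hy =>
    simp only [map_add]
    rw [hx, hy]
  | smul c x hx' hx =>
    simp only [map_smul]
    rw [hx]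

lemma K1_0 {δ : ZMod 2 × ZMod 2} {t : Aq q ⊗[ℂ] Aq q}
    (ht : t ∈ Submodule.span ℂ (Sset q δ)) :
    TensorProduct.map LinearMap.id S.Δ (S.gmul (S.Δ (gen q 0)) t)
      = Phi0 q (TensorProduct.map LinearMap.id S.Δ t) := by
  have hΔ0 : S.Δ (gen q 0) = X q ⊗ₜ[ℂ] X q := S.hΔx
  induction ht using Submodule.span_induction with
  | mem x hx =>
    obtain ⟨u, v, -, rfl⟩ := hx
    have inner : ∀ s, s ∈ Submodule.span ℂ (Sset q (degw v)) →
        (X q * pw q u) ⊗ₜ[ℂ] S.gmul (X q ⊗ₜ[ℂ] X q) s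
          = Phi0 q (pw q u ⊗ₜ[ℂ] s) := by
      intro s hs
      induction hs using Submodule.span_induction with
      | mem y hy =>
        obtain ⟨a, b, -, rfl⟩ := hy
        rw [S.hgmul X_grade (pw_mem a) (X q) (pw q b), gsign_zero_left, one_smul, Phi0,
          map_tmul, map_tmul]
        simp only [LinearMap.mulLeft_apply]
      | zero => simp
      | add y z hy' hz' hy hz =>
        simp only [map_add, tmul_add]
        rw [← hy, ← hz]
      | smul c y hy' hy =>
        simp only [map_smul, tmul_smul]
        rw [← hy]
    rw [map_tmul, hΔ0, S.hgmul X_grade (pw_mem u) (X q) (pw q v), gsign_zero_left,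
      one_smul, map_tmul]
    simp only [LinearMap.id_coe, id_eq]
    rw [S.hΔmul (X q) (pw q v), S.hΔx]
    exact inner (S.Δ (pw q v)) (delta_word S v)
  | zero => simp
  | add x y hx' hy' hx hy =>
    simp only [map_add]
    rw [hx, hy]
  | smul c x hx' hx =>
    simp only [map_smul]
    rw [hx]

lemma K2_0 {δ : ZMod 2 × ZMod 2} {t : Aq q ⊗[ℂ] Aq q}
    (ht : t ∈ Submodule.span ℂ (Sset q δ)) :
    A3 q (TensorProduct.map S.Δ LinearMap.id (S.gmul (S.Δ (gen q 0)) t))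
      = Phi0 q (A3 q (TensorProduct.map S.Δ LinearMap.id t)) := by
  have hΔ0 : S.Δ (gen q 0) = X q ⊗ₜ[ℂ] X q := S.hΔx
  induction ht using Submodule.span_induction with
  | mem x hx =>
    obtain ⟨u, v, -, rfl⟩ := hx
    have inner : ∀ s, s ∈ Submodule.span ℂ (Sset q (degw u)) →
        A3 q (S.gmul (X q ⊗ₜ[ℂ] X q) s ⊗ₜ[ℂ] (X q * pw q v))
          = Phi0 q (A3 q (s ⊗ₜ[ℂ] pw q v)) := by
      intro s hs
      induction hs using Submodule.span_induction with
      | mem y hy =>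
        obtain ⟨a, b, -, rfl⟩ := hy
        rw [S.hgmul X_grade (pw_mem a) (X q) (pw q b), gsign_zero_left, one_smul,
          A3_tmul, A3_tmul, Phi0, map_tmul, map_tmul]
        simp only [LinearMap.mulLeft_apply]
      | zero => simp
      | add y z hy' hz' hy hz =>
        simp only [map_add, add_tmul]
        rw [← hy, ← hz]
      | smul c y hy' hy =>
        simp only [map_smul, ← smul_tmul']
        rw [← hy]
    rw [map_tmul, hΔ0, S.hgmul X_grade (pw_mem u) (X q) (pw q v), gsign_zero_left,
      one_smul, map_tmul]
    simp only [LinearMap.id_coe, id_eq]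
    rw [S.hΔmul (X q) (pw q u), S.hΔx]
    exact inner (S.Δ (pw q u)) (delta_word S u)
  | zero => simp
  | add x y hx' hy' hx hy =>
    simp only [map_add]
    rw [hx, hy]
  | smul c x hx' hx =>
    simp only [map_smul]
    rw [hx]

lemma coassoc_step (i : Fin 4) {δ : ZMod 2 × ZMod 2} {t : Aq q ⊗[ℂ] Aq q}
    (ht : t ∈ Submodule.span ℂ (Sset q δ))
    (hco : A3 q (TensorProduct.map S.Δ LinearMap.id t)
      = TensorProduct.map LinearMap.id S.Δ t) :
    A3 q (TensorProduct.map S.Δ LinearMap.id (S.gmul (S.Δ (gen q i)) t))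
      = TensorProduct.map LinearMap.id S.Δ (S.gmul (S.Δ (gen q i)) t) := by
  fin_cases i
  · show A3 q (TensorProduct.map S.Δ LinearMap.id (S.gmul (S.Δ (gen q 0)) t))
      = TensorProduct.map LinearMap.id S.Δ (S.gmul (S.Δ (gen q 0)) t)
    rw [K2_0 S ht, hco, ← K1_0 S ht]
  · show A3 q (TensorProduct.map S.Δ LinearMap.id (S.gmul (S.Δ (gen q 1)) t))
      = TensorProduct.map LinearMap.id S.Δ (S.gmul (S.Δ (gen q 1)) t)
    rw [K2 S 1 S.hΔξ ht, hco, ← K1 S 1 S.hΔξ ht]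
  · show A3 q (TensorProduct.map S.Δ LinearMap.id (S.gmul (S.Δ (gen q 2)) t))
      = TensorProduct.map LinearMap.id S.Δ (S.gmul (S.Δ (gen q 2)) t)
    rw [K2 S 2 S.hΔθ ht, hco, ← K1 S 2 S.hΔθ ht]
  · show A3 q (TensorProduct.map S.Δ LinearMap.id (S.gmul (S.Δ (gen q 3)) t))
      = TensorProduct.map LinearMap.id S.Δ (S.gmul (S.Δ (gen q 3)) t)
    rw [K2 S 3 S.hΔz ht, hco, ← K1 S 3 S.hΔz ht]

lemma coassoc_word (w : List (Fin 4)) :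
    A3 q (TensorProduct.map S.Δ LinearMap.id (S.Δ (pw q w)))
      = TensorProduct.map LinearMap.id S.Δ (S.Δ (pw q w)) := by
  induction w with
  | nil =>
    rw [pw_nil, S.hΔone, map_tmul, map_tmul]
    simp only [LinearMap.id_coe, id_eq]
    rw [S.hΔone, A3_tmul]
  | cons i w ih =>
    rw [pw_cons, S.hΔmul]
    exact coassoc_step S i (delta_word S w) ih

end DGQSAux


open DGQS in
theorem statement6 (q : ℂ) (hq : q ≠ 0) (hqroot : ∀ n : ℕ, 0 < n → q ^ n ≠ 1)
    -- the graded multiplication on `A_q ⊗ A_q`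
    (gmul : (Aq q ⊗[ℂ] Aq q) →ₗ[ℂ] (Aq q ⊗[ℂ] Aq q) →ₗ[ℂ] (Aq q ⊗[ℂ] Aq q))
    (hgmul : ∀ {γ δ : ZMod 2 × ZMod 2} {b c : Aq q},
      b ∈ grading q γ → c ∈ grading q δ → ∀ a d : Aq q,
        gmul (a ⊗ₜ[ℂ] b) (c ⊗ₜ[ℂ] d) = gsign γ δ • ((a * c) ⊗ₜ[ℂ] (b * d)))
    -- the coproduct `Δ`, an algebra morphism into the graded tensor product
    (Δ : Aq q →ₗ[ℂ] Aq q ⊗[ℂ] Aq q)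
    (hΔone : Δ 1 = 1 ⊗ₜ[ℂ] 1)
    (hΔmul : ∀ a b : Aq q, Δ (a * b) = gmul (Δ a) (Δ b))
    (hΔx : Δ (X q) = X q ⊗ₜ[ℂ] X q)
    (hΔξ : Δ (Xi q) = X q ⊗ₜ[ℂ] Xi q + Xi q ⊗ₜ[ℂ] X q)
    (hΔθ : Δ (Th q) = X q ⊗ₜ[ℂ] Th q + Th q ⊗ₜ[ℂ] X q)
    (hΔz : Δ (Zg q) = X q ⊗ₜ[ℂ] Zg q + Zg q ⊗ₜ[ℂ] X q)
    -- the counit `ε`, an algebra morphism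
    (ε : Aq q →ₐ[ℂ] ℂ)
    (hεx : ε (X q) = 1) (hεξ : ε (Xi q) = 0) (hεθ : ε (Th q) = 0) (hεz : ε (Zg q) = 0)
    -- the graded interchange map `σ`
    (σ : Aq q ⊗[ℂ] Aq q →ₗ[ℂ] Aq q ⊗[ℂ] Aq q)
    (hσ : ∀ {γ δ : ZMod 2 × ZMod 2} {a b : Aq q},
      a ∈ grading q γ → b ∈ grading q δ → σ (a ⊗ₜ[ℂ] b) = gsign γ δ • (b ⊗ₜ[ℂ] a)) :
    -- coassociativity
    (TensorProduct.assoc ℂ (Aq q) (Aq q) (Aq q)).toLinearMap.comp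
        ((TensorProduct.map Δ LinearMap.id).comp Δ)
      = (TensorProduct.map LinearMap.id Δ).comp Δ ∧
    -- the counit axiom
    (TensorProduct.lid ℂ (Aq q)).toLinearMap.comp
        ((TensorProduct.map ε.toLinearMap LinearMap.id).comp Δ) = LinearMap.id ∧
    (TensorProduct.rid ℂ (Aq q)).toLinearMap.comp
        ((TensorProduct.map LinearMap.id ε.toLinearMap).comp Δ) = LinearMap.id ∧
    -- cocommutativity
    σ.comp Δ = Δ := by
  let Sp : DGQSAux.Setup q :=
    { gmul := gmul, hgmul := @hgmul, Δ := Δ, hΔone := hΔone, hΔmul := hΔmul,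
      hΔx := hΔx, hΔξ := hΔξ, hΔθ := hΔθ, hΔz := hΔz, ε := ε,
      hεx := hεx, hεξ := hεξ, hεθ := hεθ, hεz := hεz, σ := σ, hσ := @hσ }
  refine ⟨?_, ?_, ?_, ?_⟩
  · exact DGQSAux.ext_words fun w => DGQSAux.coassoc_word Sp w
  · exact DGQSAux.ext_words fun w => DGQSAux.counit_left Sp w
  · exact DGQSAux.ext_words fun w => DGQSAux.counit_right Sp w
  · exact DGQSAux.ext_words fun w => DGQSAux.cocomm_word Sp w
end

section
/- In the extended double-graded quantum superplane algebra Ā_q, the graded antihomomorphism S determined by S(x) = x⁻¹, S(x⁻¹) = x, S(ξ) = −x⁻¹ξx⁻¹, S(θ) = −x⁻¹θx⁻¹, S(z) = −x⁻¹zx⁻¹ satisfies the antipode axiom on generators: S(x)·x = 1 = x·S(x); S(x)·ξ + S(ξ)·x = 0 and x·S(ξ) + ξ·S(x) = 0; S(x)·θ + S(θ)·x = 0 and x·S(θ) + θ·S(x) = 0; S(x)·z + S(z)·x = 0 and x·S(z) + z·S(x) = 0. Equivalently, μ∘(S⊗Id)∘Δ = η∘ε = μ∘(Id⊗S)∘Δ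 holds on each generator, where Δ(x) = x⊗x and Δ(u) = x⊗u + u⊗x for u ∈ {ξ, θ, z}, ε(x) = 1, ε(ξ) = ε(θ) = ε(z) = 0. -/
/-!
STATEMENT 8: In the extended double-graded quantum superplane algebra `Ā_q`, the graded
antihomomorphism `S` determined by `S(x) = x⁻¹`, `S(x⁻¹) = x`, `S(ξ) = −x⁻¹ξx⁻¹`,
`S(θ) = −x⁻¹θx⁻¹`, `S(z) = −x⁻¹zx⁻¹` satisfies the antipode axiom
`μ∘(S⊗Id)∘Δ = η∘ε = μ∘(Id⊗S)∘Δ` on generators, where `Δ(x) = x⊗x` and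
`Δ(u) = x⊗u + u⊗x` for `u ∈ {ξ, θ, z}`, `ε(x) = 1`, `ε(ξ) = ε(θ) = ε(z) = 0`; that is:
`S(x)·x = 1 = x·S(x)`; `S(x)·ξ + S(ξ)·x = 0` and `x·S(ξ) + ξ·S(x) = 0`;
`S(x)·θ + S(θ)·x = 0` and `x·S(θ) + θ·S(x) = 0`;
`S(x)·z + S(z)·x = 0` and `x·S(z) + z·S(x) = 0`.
-/
open scoped TensorProduct

namespace DGQSext

/-- The standard scalar product `⟨(a,b),(a',b')⟩ = aa' + bb'` on `ℤ₂ × ℤ₂`. -/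
def pair2 (γ δ : ZMod 2 × ZMod 2) : ZMod 2 := γ.1 * δ.1 + γ.2 * δ.2

/-- The sign `(−1)^{⟨γ,δ⟩}`. -/
noncomputable def gsign (γ δ : ZMod 2 × ZMod 2) : ℂ := (-1 : ℂ) ^ (pair2 γ δ).val

/-- The defining relations of the extended double-graded quantum superplane, imposed on the
free algebra on five generators `x = ι 0`, `x⁻¹ = ι 1`, `ξ = ι 2`, `θ = ι 3`, `z = ι 4`:
`xξ = q ξx`, `xθ = q θx`, `xz = zx`, `ξ² = 0`, `θ² = 0`, `ξθ = θξ`, `ξz = −q⁻¹ zξ`,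
`θz = −q⁻¹ zθ`, `xx⁻¹ = x⁻¹x = 1`, `x⁻¹ξ = q⁻¹ ξx⁻¹`, `x⁻¹θ = q⁻¹ θx⁻¹`, `x⁻¹z = zx⁻¹`. -/
inductive Rel (q : ℂ) : FreeAlgebra ℂ (Fin 5) → FreeAlgebra ℂ (Fin 5) → Prop
  | x_xi : Rel q (FreeAlgebra.ι ℂ (0 : Fin 5) * FreeAlgebra.ι ℂ (2 : Fin 5))
      (q • (FreeAlgebra.ι ℂ (2 : Fin 5) * FreeAlgebra.ι ℂ (0 : Fin 5)))
  | x_th : Rel q (FreeAlgebra.ι ℂ (0 : Fin 5) * FreeAlgebra.ι ℂ (3 : Fin 5))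
      (q • (FreeAlgebra.ι ℂ (3 : Fin 5) * FreeAlgebra.ι ℂ (0 : Fin 5)))
  | x_z : Rel q (FreeAlgebra.ι ℂ (0 : Fin 5) * FreeAlgebra.ι ℂ (4 : Fin 5))
      (FreeAlgebra.ι ℂ (4 : Fin 5) * FreeAlgebra.ι ℂ (0 : Fin 5))
  | xi_sq : Rel q (FreeAlgebra.ι ℂ (2 : Fin 5) * FreeAlgebra.ι ℂ (2 : Fin 5)) 0
  | th_sq : Rel q (FreeAlgebra.ι ℂ (3 : Fin 5) * FreeAlgebra.ι ℂ (3 : Fin 5)) 0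
  | xi_th : Rel q (FreeAlgebra.ι ℂ (2 : Fin 5) * FreeAlgebra.ι ℂ (3 : Fin 5))
      (FreeAlgebra.ι ℂ (3 : Fin 5) * FreeAlgebra.ι ℂ (2 : Fin 5))
  | xi_z : Rel q (FreeAlgebra.ι ℂ (2 : Fin 5) * FreeAlgebra.ι ℂ (4 : Fin 5))
      ((-q⁻¹) • (FreeAlgebra.ι ℂ (4 : Fin 5) * FreeAlgebra.ι ℂ (2 : Fin 5)))
  | th_z : Rel q (FreeAlgebra.ι ℂ (3 : Fin 5) * FreeAlgebra.ι ℂ (4 : Fin 5))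
      ((-q⁻¹) • (FreeAlgebra.ι ℂ (4 : Fin 5) * FreeAlgebra.ι ℂ (3 : Fin 5)))
  | x_xinv : Rel q (FreeAlgebra.ι ℂ (0 : Fin 5) * FreeAlgebra.ι ℂ (1 : Fin 5)) 1
  | xinv_x : Rel q (FreeAlgebra.ι ℂ (1 : Fin 5) * FreeAlgebra.ι ℂ (0 : Fin 5)) 1
  | xinv_xi : Rel q (FreeAlgebra.ι ℂ (1 : Fin 5) * FreeAlgebra.ι ℂ (2 : Fin 5))
      (q⁻¹ • (FreeAlgebra.ι ℂ (2 : Fin 5) * FreeAlgebra.ι ℂ (1 : Fin 5)))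
  | xinv_th : Rel q (FreeAlgebra.ι ℂ (1 : Fin 5) * FreeAlgebra.ι ℂ (3 : Fin 5))
      (q⁻¹ • (FreeAlgebra.ι ℂ (3 : Fin 5) * FreeAlgebra.ι ℂ (1 : Fin 5)))
  | xinv_z : Rel q (FreeAlgebra.ι ℂ (1 : Fin 5) * FreeAlgebra.ι ℂ (4 : Fin 5))
      (FreeAlgebra.ι ℂ (4 : Fin 5) * FreeAlgebra.ι ℂ (1 : Fin 5))

/-- The algebra of polynomials on the extended double-graded quantum superplane. -/
abbrev Abar (q : ℂ) : Type := RingQuot (Rel q)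

/-- The generators of `Ā_q`. -/
noncomputable def gen (q : ℂ) (i : Fin 5) : Abar q :=
  RingQuot.mkAlgHom ℂ (Rel q) (FreeAlgebra.ι ℂ i)

/-- The generator `x`, of degree `(0,0)`. -/
noncomputable def X (q : ℂ) : Abar q := gen q 0
/-- The generator `x⁻¹`, of degree `(0,0)`. -/
noncomputable def Xinv (q : ℂ) : Abar q := gen q 1
/-- The generator `ξ`, of degree `(0,1)`. -/
noncomputable def Xi (q : ℂ) : Abar q := gen q 2
/-- The generator `θ`, of degree `(1,0)`. -/
noncomputable def Th (q : ℂ) : Abar q := gen q 3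
/-- The generator `z`, of degree `(1,1)`. -/
noncomputable def Zg (q : ℂ) : Abar q := gen q 4

/-- The `ℤ₂ × ℤ₂`-degrees of the generators. -/
def dg : Fin 5 → ZMod 2 × ZMod 2 := ![(0, 0), (0, 0), (0, 1), (1, 0), (1, 1)]

/-- The homogeneous component of degree `γ` of `Ā_q`: the span of the images of the
words in the generators of total degree `γ`. -/
noncomputable def grading (q : ℂ) (γ : ZMod 2 × ZMod 2) : Submodule ℂ (Abar q) :=
  Submodule.span ℂ
    { a | ∃ w : List (Fin 5), (w.map dg).sum = γ ∧ a = (w.map (gen q)).prod }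

end DGQSext


namespace DGQSext
lemma xinv_x_eq (q : ℂ) : Xinv q * X q = 1 := by
  have h := RingQuot.mkAlgHom_rel ℂ (Rel.xinv_x (q := q))
  simpa [Xinv, X, gen, map_mul] using h

lemma x_xinv_eq (q : ℂ) : X q * Xinv q = 1 := by
  have h := RingQuot.mkAlgHom_rel ℂ (Rel.x_xinv (q := q))
  simpa [Xinv, X, gen, map_mul] using h

lemma nm (q : ℂ) (a b : Abar q) : (-a) * b = -(a * b) := neg_mul a b
lemma mn (q : ℂ) (a b : Abar q) : a * (-b) = -(a * b) := mul_neg a b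

lemma cancel_left (q : ℂ) (u : Abar q) :
    Xinv q * u + (-(Xinv q * u * Xinv q)) * X q = 0 := by
  have h : Xinv q * u * Xinv q * X q = Xinv q * u := by
    rw [mul_assoc, xinv_x_eq, mul_one]
  rw [nm, h, add_neg_cancel]

lemma cancel_right (q : ℂ) (u : Abar q) :
    X q * (-(Xinv q * u * Xinv q)) + u * Xinv q = 0 := by
  have h : X q * (Xinv q * u * Xinv q) = u * Xinv q := by
    rw [← mul_assoc, ← mul_assoc, x_xinv_eq, one_mul]
  rw [mn, h, neg_add_cancel]

end DGQSext

open DGQSext in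
theorem statement8 (q : ℂ) (hq : q ≠ 0) (hqroot : ∀ n : ℕ, 0 < n → q ^ n ≠ 1) :
    -- `S(x)·x = 1 = x·S(x)`
    Xinv q * X q = 1 ∧ X q * Xinv q = 1 ∧
    -- `S(x)·ξ + S(ξ)·x = 0` and `x·S(ξ) + ξ·S(x) = 0`
    Xinv q * Xi q + (-(Xinv q * Xi q * Xinv q)) * X q = 0 ∧
    X q * (-(Xinv q * Xi q * Xinv q)) + Xi q * Xinv q = 0 ∧
    -- `S(x)·θ + S(θ)·x = 0` and `x·S(θ) + θ·S(x) = 0`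
    Xinv q * Th q + (-(Xinv q * Th q * Xinv q)) * X q = 0 ∧
    X q * (-(Xinv q * Th q * Xinv q)) + Th q * Xinv q = 0 ∧
    -- `S(x)·z + S(z)·x = 0` and `x·S(z) + z·S(x) = 0`
    Xinv q * Zg q + (-(Xinv q * Zg q * Xinv q)) * X q = 0 ∧
    X q * (-(Xinv q * Zg q * Xinv q)) + Zg q * Xinv q = 0 := by
  refine ⟨xinv_x_eq q, x_xinv_eq q, cancel_left q _, cancel_right q _,
    cancel_left q _, cancel_right q _, cancel_left q _, cancel_right q _⟩
end

section
/- In the graded tensor product Ā_q ⊗ Ā_q, the elements X⁻¹ = x⁻¹⊗x⁻¹, Ξ = x⊗ξ + ξ⊗x, Θ = x⊗θ + θ⊗x and Z = x⊗z + z⊗x satisfy X⁻¹·Ξ = q⁻¹ Ξ·X⁻¹, X⁻¹·Θ = q⁻¹ Θ·X⁻¹, X⁻¹·Z = Z·X⁻¹, and X⁻¹ is a two-sided inverse of X = x⊗x. Consequently Δ extends from A_q to a well-defined algebra morphism on the extended algebra Ā_q with Δ(x⁻¹) = x⁻¹⊗x⁻¹. -/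
/-!
STATEMENT 10: In the graded tensor product `Ā_q ⊗ Ā_q`, the elements `X⁻¹ = x⁻¹⊗x⁻¹`,
`Ξ = x⊗ξ + ξ⊗x`, `Θ = x⊗θ + θ⊗x` and `Z = x⊗z + z⊗x` satisfy `X⁻¹·Ξ = q⁻¹ Ξ·X⁻¹`,
`X⁻¹·Θ = q⁻¹ Θ·X⁻¹`, `X⁻¹·Z = Z·X⁻¹`, and `X⁻¹` is a two-sided inverse of `X = x⊗x`.
Consequently `Δ` extends from `A_q` to a well-defined algebra morphism on the extended
algebra `Ā_q` with `Δ(x⁻¹) = x⁻¹⊗x⁻¹`.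
The graded tensor product carries the multiplication
`(a⊗b)(c⊗d) = (−1)^{⟨deg b, deg c⟩} ac ⊗ bd` on homogeneous elements.
-/
open scoped TensorProduct

namespace DGQSext

open TensorProduct

variable (q : ℂ)

/-- Abbreviation for the graded-multiplication hypothesis. -/
abbrev HG (gmul : (Abar q ⊗[ℂ] Abar q) →ₗ[ℂ] (Abar q ⊗[ℂ] Abar q) →ₗ[ℂ] (Abar q ⊗[ℂ] Abar q)) :
    Prop :=
  ∀ {γ δ : ZMod 2 × ZMod 2} {b c : Abar q},
    b ∈ grading q γ → c ∈ grading q δ → ∀ a d : Abar q,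
      gmul (a ⊗ₜ[ℂ] b) (c ⊗ₜ[ℂ] d) = gsign γ δ • ((a * c) ⊗ₜ[ℂ] (b * d))

/-! ### Homogeneity of the generators -/

lemma gen_mem (i : Fin 5) : gen q i ∈ grading q (dg i) :=
  Submodule.subset_span ⟨[i], by simp, by simp⟩

lemma memX : X q ∈ grading q 0 := by
  have h : dg 0 = 0 := by decide
  exact h ▸ gen_mem q 0

lemma memXinv : Xinv q ∈ grading q 0 := by
  have h : dg 1 = 0 := by decide
  exact h ▸ gen_mem q 1

lemma memXi : Xi q ∈ grading q ((0 : ZMod 2), (1 : ZMod 2)) := by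
  have h : dg 2 = ((0 : ZMod 2), (1 : ZMod 2)) := by decide
  exact h ▸ gen_mem q 2

lemma memTh : Th q ∈ grading q ((1 : ZMod 2), (0 : ZMod 2)) := by
  have h : dg 3 = ((1 : ZMod 2), (0 : ZMod 2)) := by decide
  exact h ▸ gen_mem q 3

lemma memZg : Zg q ∈ grading q ((1 : ZMod 2), (1 : ZMod 2)) := by
  have h : dg 4 = ((1 : ZMod 2), (1 : ZMod 2)) := by decide
  exact h ▸ gen_mem q 4

lemma one_mem : (1 : Abar q) ∈ grading q 0 :=
  Submodule.subset_span ⟨[], by simp, by simp⟩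

lemma mul_mem_grading {γ δ : ZMod 2 × ZMod 2} {a b : Abar q}
    (ha : a ∈ grading q γ) (hb : b ∈ grading q δ) : a * b ∈ grading q (γ + δ) := by
  induction ha using Submodule.span_induction with
  | mem u hu =>
      obtain ⟨w₁, hw₁, rfl⟩ := hu
      induction hb using Submodule.span_induction with
      | mem v hv =>
          obtain ⟨w₂, hw₂, rfl⟩ := hv
          exact Submodule.subset_span
            ⟨w₁ ++ w₂, by simp [List.sum_append, hw₁, hw₂], by simp [List.prod_append]⟩
      | zero => rw [mul_zero]; exact zero_mem _
      | add x y hx hy px py => rw [mul_add]; exact add_mem px py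
      | smul r x hx px => rw [mul_smul_comm]; exact Submodule.smul_mem _ _ px
  | zero => rw [zero_mul]; exact zero_mem _
  | add x y hx hy px py => rw [add_mul]; exact add_mem px py
  | smul r x hx px => rw [smul_mul_assoc]; exact Submodule.smul_mem _ _ px

/-! ### The defining relations, in `Ā_q` -/

lemma rel1 : X q * Xi q = q • (Xi q * X q) := by
  simpa only [map_mul, map_smul, X, Xinv, Xi, Th, Zg, gen] using RingQuot.mkAlgHom_rel ℂ (Rel.x_xi (q := q))
lemma rel2 : X q * Th q = q • (Th q * X q) := by
  simpa only [map_mul, map_smul, X, Xinv, Xi, Th, Zg, gen] using RingQuot.mkAlgHom_rel ℂ (Rel.x_th (q := q))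
lemma rel3 : X q * Zg q = Zg q * X q := by
  simpa only [map_mul, X, Xinv, Xi, Th, Zg, gen] using RingQuot.mkAlgHom_rel ℂ (Rel.x_z (q := q))
lemma rel4 : Xi q * Xi q = 0 := by
  simpa only [map_mul, map_zero, X, Xinv, Xi, Th, Zg, gen] using RingQuot.mkAlgHom_rel ℂ (Rel.xi_sq (q := q))
lemma rel5 : Th q * Th q = 0 := by
  simpa only [map_mul, map_zero, X, Xinv, Xi, Th, Zg, gen] using RingQuot.mkAlgHom_rel ℂ (Rel.th_sq (q := q))
lemma rel6 : Xi q * Th q = Th q * Xi q := by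
  simpa only [map_mul, X, Xinv, Xi, Th, Zg, gen] using RingQuot.mkAlgHom_rel ℂ (Rel.xi_th (q := q))
lemma rel7 : Xi q * Zg q = (-q⁻¹) • (Zg q * Xi q) := by
  simpa only [map_mul, map_smul, X, Xinv, Xi, Th, Zg, gen] using RingQuot.mkAlgHom_rel ℂ (Rel.xi_z (q := q))
lemma rel8 : Th q * Zg q = (-q⁻¹) • (Zg q * Th q) := by
  simpa only [map_mul, map_smul, X, Xinv, Xi, Th, Zg, gen] using RingQuot.mkAlgHom_rel ℂ (Rel.th_z (q := q))
lemma rel9 : X q * Xinv q = 1 := by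
  simpa only [map_mul, map_one, X, Xinv, Xi, Th, Zg, gen] using RingQuot.mkAlgHom_rel ℂ (Rel.x_xinv (q := q))
lemma rel10 : Xinv q * X q = 1 := by
  simpa only [map_mul, map_one, X, Xinv, Xi, Th, Zg, gen] using RingQuot.mkAlgHom_rel ℂ (Rel.xinv_x (q := q))
lemma rel11 : Xinv q * Xi q = q⁻¹ • (Xi q * Xinv q) := by
  simpa only [map_mul, map_smul, X, Xinv, Xi, Th, Zg, gen] using RingQuot.mkAlgHom_rel ℂ (Rel.xinv_xi (q := q))
lemma rel12 : Xinv q * Th q = q⁻¹ • (Th q * Xinv q) := by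
  simpa only [map_mul, map_smul, X, Xinv, Xi, Th, Zg, gen] using RingQuot.mkAlgHom_rel ℂ (Rel.xinv_th (q := q))
lemma rel13 : Xinv q * Zg q = Zg q * Xinv q := by
  simpa only [map_mul, X, Xinv, Xi, Th, Zg, gen] using RingQuot.mkAlgHom_rel ℂ (Rel.xinv_z (q := q))

/-! ### Values of the sign `gsign` -/

lemma gsign_zero_left (δ : ZMod 2 × ZMod 2) : gsign 0 δ = 1 := by
  unfold gsign
  rw [show pair2 0 δ = 0 by simp [pair2]]
  norm_num

lemma gsign_zero_right (γ : ZMod 2 × ZMod 2) : gsign γ 0 = 1 := by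
  unfold gsign
  rw [show pair2 γ 0 = 0 by simp [pair2]]
  norm_num

lemma gsign_ss : gsign ((0 : ZMod 2), (1 : ZMod 2)) ((0 : ZMod 2), (1 : ZMod 2)) = -1 := by
  unfold gsign
  rw [show (pair2 ((0 : ZMod 2), (1 : ZMod 2)) ((0 : ZMod 2), (1 : ZMod 2))).val = 1 by decide]
  norm_num

lemma gsign_st : gsign ((0 : ZMod 2), (1 : ZMod 2)) ((1 : ZMod 2), (0 : ZMod 2)) = 1 := by
  unfold gsign
  rw [show (pair2 ((0 : ZMod 2), (1 : ZMod 2)) ((1 : ZMod 2), (0 : ZMod 2))).val = 0 by decide]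
  norm_num

lemma gsign_ts : gsign ((1 : ZMod 2), (0 : ZMod 2)) ((0 : ZMod 2), (1 : ZMod 2)) = 1 := by
  unfold gsign
  rw [show (pair2 ((1 : ZMod 2), (0 : ZMod 2)) ((0 : ZMod 2), (1 : ZMod 2))).val = 0 by decide]
  norm_num

lemma gsign_tt : gsign ((1 : ZMod 2), (0 : ZMod 2)) ((1 : ZMod 2), (0 : ZMod 2)) = -1 := by
  unfold gsign
  rw [show (pair2 ((1 : ZMod 2), (0 : ZMod 2)) ((1 : ZMod 2), (0 : ZMod 2))).val = 1 by decide]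
  norm_num

lemma gsign_su : gsign ((0 : ZMod 2), (1 : ZMod 2)) ((1 : ZMod 2), (1 : ZMod 2)) = -1 := by
  unfold gsign
  rw [show (pair2 ((0 : ZMod 2), (1 : ZMod 2)) ((1 : ZMod 2), (1 : ZMod 2))).val = 1 by decide]
  norm_num

lemma gsign_us : gsign ((1 : ZMod 2), (1 : ZMod 2)) ((0 : ZMod 2), (1 : ZMod 2)) = -1 := by
  unfold gsign
  rw [show (pair2 ((1 : ZMod 2), (1 : ZMod 2)) ((0 : ZMod 2), (1 : ZMod 2))).val = 1 by decide]
  norm_num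

lemma gsign_tu : gsign ((1 : ZMod 2), (0 : ZMod 2)) ((1 : ZMod 2), (1 : ZMod 2)) = -1 := by
  unfold gsign
  rw [show (pair2 ((1 : ZMod 2), (0 : ZMod 2)) ((1 : ZMod 2), (1 : ZMod 2))).val = 1 by decide]
  norm_num

lemma gsign_ut : gsign ((1 : ZMod 2), (1 : ZMod 2)) ((1 : ZMod 2), (0 : ZMod 2)) = -1 := by
  unfold gsign
  rw [show (pair2 ((1 : ZMod 2), (1 : ZMod 2)) ((1 : ZMod 2), (0 : ZMod 2))).val = 1 by decide]
  norm_num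

lemma gsign_uu : gsign ((1 : ZMod 2), (1 : ZMod 2)) ((1 : ZMod 2), (1 : ZMod 2)) = 1 := by
  unfold gsign
  rw [show (pair2 ((1 : ZMod 2), (1 : ZMod 2)) ((1 : ZMod 2), (1 : ZMod 2))).val = 0 by decide]
  norm_num

lemma neg_one_pow_add (a b : ZMod 2) :
    (-1 : ℂ) ^ (a + b).val = (-1 : ℂ) ^ a.val * (-1 : ℂ) ^ b.val := by
  rw [ZMod.val_add, ← neg_one_pow_eq_pow_mod_two, pow_add]

lemma pair2_add_left (γ δ ε : ZMod 2 × ZMod 2) :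
    pair2 (γ + δ) ε = pair2 γ ε + pair2 δ ε := by
  simp only [pair2, Prod.fst_add, Prod.snd_add]
  ring

lemma pair2_add_right (γ δ ε : ZMod 2 × ZMod 2) :
    pair2 γ (δ + ε) = pair2 γ δ + pair2 γ ε := by
  simp only [pair2, Prod.fst_add, Prod.snd_add]
  ring

lemma gsign_add_left (γ δ ε : ZMod 2 × ZMod 2) :
    gsign (γ + δ) ε = gsign γ ε * gsign δ ε := by
  unfold gsign
  rw [pair2_add_left, neg_one_pow_add]

lemma gsign_add_right (γ δ ε : ZMod 2 × ZMod 2) :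
    gsign γ (δ + ε) = gsign γ δ * gsign γ ε := by
  unfold gsign
  rw [pair2_add_right, neg_one_pow_add]

/-! ### Spanning by homogeneous elements -/

def homSet : Set (Abar q) := {a | ∃ γ, a ∈ grading q γ}

lemma mul_mem_span_homSet {a b : Abar q} (ha : a ∈ Submodule.span ℂ (homSet q))
    (hb : b ∈ Submodule.span ℂ (homSet q)) :
    a * b ∈ Submodule.span ℂ (homSet q) := by
  induction ha using Submodule.span_induction with
  | mem u hu =>
      induction hb using Submodule.span_induction with
      | mem v hv =>
          obtain ⟨γ, hγ⟩ := hu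
          obtain ⟨δ, hδ⟩ := hv
          exact Submodule.subset_span ⟨γ + δ, mul_mem_grading q hγ hδ⟩
      | zero => rw [mul_zero]; exact zero_mem _
      | add x y hx hy px py => rw [mul_add]; exact add_mem px py
      | smul r x hx px => rw [mul_smul_comm]; exact Submodule.smul_mem _ _ px
  | zero => rw [zero_mul]; exact zero_mem _
  | add x y hx hy px py => rw [add_mul]; exact add_mem px py
  | smul r x hx px => rw [smul_mul_assoc]; exact Submodule.smul_mem _ _ px

lemma span_homSet : Submodule.span ℂ (homSet q) = ⊤ := by
  rw [eq_top_iff]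
  rintro a -
  obtain ⟨f, rfl⟩ := RingQuot.mkAlgHom_surjective ℂ (Rel q) a
  induction f using FreeAlgebra.induction with
  | grade0 r =>
      rw [AlgHom.commutes, Algebra.algebraMap_eq_smul_one]
      exact Submodule.smul_mem _ _ (Submodule.subset_span ⟨0, one_mem q⟩)
  | grade1 i => exact Submodule.subset_span ⟨dg i, gen_mem q i⟩
  | mul x y hx hy => rw [map_mul]; exact mul_mem_span_homSet q hx hy
  | add x y hx hy => rw [map_add]; exact add_mem hx hy

def homTens : Set (Abar q ⊗[ℂ] Abar q) :=
  {u | ∃ (γ δ : ZMod 2 × ZMod 2) (c d : Abar q),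
    c ∈ grading q γ ∧ d ∈ grading q δ ∧ u = c ⊗ₜ[ℂ] d}

lemma mem_span_homTens (t : Abar q ⊗[ℂ] Abar q) : t ∈ Submodule.span ℂ (homTens q) := by
  induction t using TensorProduct.induction_on with
  | zero => exact zero_mem _
  | add x y hx hy => exact add_mem hx hy
  | tmul c d =>
      have hc : c ∈ Submodule.span ℂ (homSet q) := by
        rw [span_homSet]; exact Submodule.mem_top
      have hd : d ∈ Submodule.span ℂ (homSet q) := by
        rw [span_homSet]; exact Submodule.mem_top
      induction hc using Submodule.span_induction with
      | mem u hu =>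
          induction hd using Submodule.span_induction with
          | mem v hv =>
              obtain ⟨γ, hγ⟩ := hu
              obtain ⟨δ, hδ⟩ := hv
              exact Submodule.subset_span ⟨γ, δ, u, v, hγ, hδ, rfl⟩
          | zero => rw [tmul_zero]; exact zero_mem _
          | add x y hx hy px py => rw [tmul_add]; exact add_mem px py
          | smul r x hx px => rw [tmul_smul]; exact Submodule.smul_mem _ _ px
      | zero => rw [zero_tmul]; exact zero_mem _
      | add x y hx hy px py => rw [add_tmul]; exact add_mem px py
      | smul r x hx px => rw [← smul_tmul']; exact Submodule.smul_mem _ _ px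

/-! ### The graded multiplication is unital and associative -/

variable (gmul : (Abar q ⊗[ℂ] Abar q) →ₗ[ℂ] (Abar q ⊗[ℂ] Abar q) →ₗ[ℂ] (Abar q ⊗[ℂ] Abar q))

lemma gmul_one_left (hg : HG q gmul) (t : Abar q ⊗[ℂ] Abar q) :
    gmul ((1 : Abar q) ⊗ₜ[ℂ] (1 : Abar q)) t = t := by
  have ht := mem_span_homTens q t
  induction ht using Submodule.span_induction with
  | mem u hu =>
      obtain ⟨γ, δ, c, d, hc, hd, rfl⟩ := hu
      rw [hg (one_mem q) hc 1 d, gsign_zero_left, one_smul, one_mul, one_mul]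
  | zero => rw [map_zero]
  | add x y hx hy px py => rw [map_add, px, py]
  | smul r x hx px => rw [map_smul, px]

lemma gmul_one_right (hg : HG q gmul) (t : Abar q ⊗[ℂ] Abar q) :
    gmul t ((1 : Abar q) ⊗ₜ[ℂ] (1 : Abar q)) = t := by
  have ht := mem_span_homTens q t
  induction ht using Submodule.span_induction with
  | mem u hu =>
      obtain ⟨γ, δ, c, d, hc, hd, rfl⟩ := hu
      rw [hg hd (one_mem q) c 1, gsign_zero_right, one_smul, mul_one, mul_one]
  | zero => rw [map_zero, LinearMap.zero_apply]
  | add x y hx hy px py => rw [map_add, LinearMap.add_apply, px, py]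
  | smul r x hx px => rw [map_smul, LinearMap.smul_apply, px]

lemma gmul_assoc (hg : HG q gmul) (t u v : Abar q ⊗[ℂ] Abar q) :
    gmul (gmul t u) v = gmul t (gmul u v) := by
  have core : ∀ {β γ δ ε : ZMod 2 × ZMod 2} {b c d e : Abar q},
      b ∈ grading q β → c ∈ grading q γ → d ∈ grading q δ → e ∈ grading q ε →
      ∀ a f : Abar q,
      gmul (gmul (a ⊗ₜ[ℂ] b) (c ⊗ₜ[ℂ] d)) (e ⊗ₜ[ℂ] f)
        = gmul (a ⊗ₜ[ℂ] b) (gmul (c ⊗ₜ[ℂ] d) (e ⊗ₜ[ℂ] f)) := by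
    intro β γ δ ε b c d e hb hc hd he a f
    rw [hg hb hc a d, hg hd he c f]
    simp only [map_smul, LinearMap.smul_apply]
    rw [hg (mul_mem_grading q hb hd) he (a * c) f,
        hg hb (mul_mem_grading q hc he) a (d * f)]
    rw [smul_smul, smul_smul, mul_assoc a c e, mul_assoc b d f,
        gsign_add_left, gsign_add_right]
    congr 1
    ring
  have step2 : ∀ {β γ δ : ZMod 2 × ZMod 2} {b c d : Abar q},
      b ∈ grading q β → c ∈ grading q γ → d ∈ grading q δ → ∀ (a : Abar q)
      (v : Abar q ⊗[ℂ] Abar q),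
      gmul (gmul (a ⊗ₜ[ℂ] b) (c ⊗ₜ[ℂ] d)) v
        = gmul (a ⊗ₜ[ℂ] b) (gmul (c ⊗ₜ[ℂ] d) v) := by
    intro β γ δ b c d hb hc hd a v
    have hv := mem_span_homTens q v
    induction hv using Submodule.span_induction with
    | mem w hw =>
        obtain ⟨ε, ζ, e, f, he, hf, rfl⟩ := hw
        exact core hb hc hd he a f
    | zero => simp only [map_zero]
    | add x y hx hy px py => simp only [map_add, px, py]
    | smul r x hx px => simp only [map_smul, px]
  have step3 : ∀ {β : ZMod 2 × ZMod 2} {b : Abar q}, b ∈ grading q β →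
      ∀ (a : Abar q) (u v : Abar q ⊗[ℂ] Abar q),
      gmul (gmul (a ⊗ₜ[ℂ] b) u) v = gmul (a ⊗ₜ[ℂ] b) (gmul u v) := by
    intro β b hb a u v
    have hu := mem_span_homTens q u
    induction hu using Submodule.span_induction with
    | mem w hw =>
        obtain ⟨γ, δ, c, d, hc, hd, rfl⟩ := hw
        exact step2 hb hc hd a v
    | zero => simp only [map_zero, LinearMap.zero_apply]
    | add x y hx hy px py =>
        simp only [map_add, LinearMap.add_apply, px, py]
    | smul r x hx px =>
        simp only [map_smul, LinearMap.smul_apply, px]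
  have ht := mem_span_homTens q t
  induction ht using Submodule.span_induction with
  | mem w hw =>
      obtain ⟨γ, δ, a, b, ha, hb, rfl⟩ := hw
      exact step3 hb a u v
  | zero => simp only [map_zero, LinearMap.zero_apply]
  | add x y hx hy px py =>
      simp only [map_add, LinearMap.add_apply, px, py]
  | smul r x hx px =>
      simp only [map_smul, LinearMap.smul_apply, px]

end DGQSext

/-- Type synonym for `Ā_q ⊗ Ā_q`, carrying the graded multiplication. -/
def DGQSext.TP (q : ℂ) : Type := DGQSext.Abar q ⊗[ℂ] DGQSext.Abar q

namespace DGQSext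

noncomputable instance (q : ℂ) : AddCommGroup (TP q) :=
  (inferInstance : AddCommGroup (Abar q ⊗[ℂ] Abar q))

noncomputable instance (q : ℂ) : Module ℂ (TP q) :=
  (inferInstance : Module ℂ (Abar q ⊗[ℂ] Abar q))

variable (q : ℂ)
variable (gmul : (Abar q ⊗[ℂ] Abar q) →ₗ[ℂ] (Abar q ⊗[ℂ] Abar q) →ₗ[ℂ] (Abar q ⊗[ℂ] Abar q))

/-- The ring structure on `Ā_q ⊗ Ā_q` given by the graded multiplication. -/
noncomputable abbrev tRing (hg : HG q gmul) : Ring (TP q) :=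
  { (inferInstance : AddCommGroup (TP q)) with
    mul := fun t u => gmul t u
    one := (1 : Abar q) ⊗ₜ[ℂ] (1 : Abar q)
    mul_assoc := fun t u v => gmul_assoc q gmul hg t u v
    one_mul := fun t => gmul_one_left q gmul hg t
    mul_one := fun t => gmul_one_right q gmul hg t
    left_distrib := fun t u v => map_add (gmul t) u v
    right_distrib := fun t u v => by
      show gmul (t + u) v = gmul t v + gmul u v
      exact LinearMap.congr_fun (map_add gmul t u) v
    zero_mul := fun t => by show gmul 0 t = 0; rw [map_zero]; rfl
    mul_zero := fun t => by show gmul t 0 = 0; rw [map_zero]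
    natCast := fun n => n • ((1 : Abar q) ⊗ₜ[ℂ] (1 : Abar q))
    natCast_zero := zero_nsmul _
    natCast_succ := fun n => succ_nsmul _ n
    intCast := fun n => n • ((1 : Abar q) ⊗ₜ[ℂ] (1 : Abar q))
    intCast_ofNat := fun n => natCast_zsmul _ n
    intCast_negSucc := fun n => negSucc_zsmul _ n }

/-- The images of the generators under the coproduct. -/
noncomputable def gfun : Fin 5 → TP q
  | ⟨0, _⟩ => X q ⊗ₜ[ℂ] X q
  | ⟨1, _⟩ => Xinv q ⊗ₜ[ℂ] Xinv q
  | ⟨2, _⟩ => X q ⊗ₜ[ℂ] Xi q + Xi q ⊗ₜ[ℂ] X q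
  | ⟨3, _⟩ => X q ⊗ₜ[ℂ] Th q + Th q ⊗ₜ[ℂ] X q
  | ⟨4, _⟩ => X q ⊗ₜ[ℂ] Zg q + Zg q ⊗ₜ[ℂ] X q

lemma gfun0 : gfun q 0 = X q ⊗ₜ[ℂ] X q := rfl
lemma gfun1 : gfun q 1 = Xinv q ⊗ₜ[ℂ] Xinv q := rfl
lemma gfun2 : gfun q 2 = X q ⊗ₜ[ℂ] Xi q + Xi q ⊗ₜ[ℂ] X q := rfl
lemma gfun3 : gfun q 3 = X q ⊗ₜ[ℂ] Th q + Th q ⊗ₜ[ℂ] X q := rfl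
lemma gfun4 : gfun q 4 = X q ⊗ₜ[ℂ] Zg q + Zg q ⊗ₜ[ℂ] X q := rfl

end DGQSext


set_option maxHeartbeats 1600000 in
set_option synthInstance.maxHeartbeats 400000 in
open DGQSext in
theorem statement10 (q : ℂ) (hq : q ≠ 0) (hqroot : ∀ n : ℕ, 0 < n → q ^ n ≠ 1)
    (gmul : (Abar q ⊗[ℂ] Abar q) →ₗ[ℂ] (Abar q ⊗[ℂ] Abar q) →ₗ[ℂ] (Abar q ⊗[ℂ] Abar q))
    (hgmul : ∀ {γ δ : ZMod 2 × ZMod 2} {b c : Abar q},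
      b ∈ grading q γ → c ∈ grading q δ → ∀ a d : Abar q,
        gmul (a ⊗ₜ[ℂ] b) (c ⊗ₜ[ℂ] d) = gsign γ δ • ((a * c) ⊗ₜ[ℂ] (b * d))) :
    gmul (Xinv q ⊗ₜ[ℂ] Xinv q) (X q ⊗ₜ[ℂ] Xi q + Xi q ⊗ₜ[ℂ] X q)
        = q⁻¹ • gmul (X q ⊗ₜ[ℂ] Xi q + Xi q ⊗ₜ[ℂ] X q) (Xinv q ⊗ₜ[ℂ] Xinv q) ∧
    gmul (Xinv q ⊗ₜ[ℂ] Xinv q) (X q ⊗ₜ[ℂ] Th q + Th q ⊗ₜ[ℂ] X q)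
        = q⁻¹ • gmul (X q ⊗ₜ[ℂ] Th q + Th q ⊗ₜ[ℂ] X q) (Xinv q ⊗ₜ[ℂ] Xinv q) ∧
    gmul (Xinv q ⊗ₜ[ℂ] Xinv q) (X q ⊗ₜ[ℂ] Zg q + Zg q ⊗ₜ[ℂ] X q)
        = gmul (X q ⊗ₜ[ℂ] Zg q + Zg q ⊗ₜ[ℂ] X q) (Xinv q ⊗ₜ[ℂ] Xinv q) ∧
    gmul (Xinv q ⊗ₜ[ℂ] Xinv q) (X q ⊗ₜ[ℂ] X q) = 1 ⊗ₜ[ℂ] 1 ∧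
    gmul (X q ⊗ₜ[ℂ] X q) (Xinv q ⊗ₜ[ℂ] Xinv q) = 1 ⊗ₜ[ℂ] 1 ∧
    ∃ D : Abar q →ₗ[ℂ] Abar q ⊗[ℂ] Abar q,
      D 1 = 1 ⊗ₜ[ℂ] 1 ∧
      (∀ a b : Abar q, D (a * b) = gmul (D a) (D b)) ∧
      D (X q) = X q ⊗ₜ[ℂ] X q ∧
      D (Xinv q) = Xinv q ⊗ₜ[ℂ] Xinv q ∧
      D (Xi q) = X q ⊗ₜ[ℂ] Xi q + Xi q ⊗ₜ[ℂ] X q ∧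
      D (Th q) = X q ⊗ₜ[ℂ] Th q + Th q ⊗ₜ[ℂ] X q ∧
      D (Zg q) = X q ⊗ₜ[ℂ] Zg q + Zg q ⊗ₜ[ℂ] X q := by
  open TensorProduct in
  refine ⟨?_, ?_, ?_, ?_, ?_, ?_⟩
  · -- X⁻¹ · Ξ = q⁻¹ Ξ · X⁻¹
    simp only [map_add, LinearMap.add_apply]
    rw [hgmul (memXinv q) (memX q) (Xinv q) (Xi q),
        hgmul (memXinv q) (memXi q) (Xinv q) (X q),
        hgmul (memXi q) (memXinv q) (X q) (Xinv q),
        hgmul (memX q) (memXinv q) (Xi q) (Xinv q)]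
    simp only [gsign_zero_left, gsign_zero_right, one_smul, rel9 q, rel10 q, rel11 q]
    simp only [smul_tmul, tmul_smul, smul_smul, smul_add, neg_smul, smul_neg, neg_tmul, tmul_neg, smul_zero]
    try (match_scalars <;> (try field_simp) <;> (try ring))
  · -- X⁻¹ · Θ = q⁻¹ Θ · X⁻¹
    simp only [map_add, LinearMap.add_apply]
    rw [hgmul (memXinv q) (memX q) (Xinv q) (Th q),
        hgmul (memXinv q) (memTh q) (Xinv q) (X q),
        hgmul (memTh q) (memXinv q) (X q) (Xinv q),
        hgmul (memX q) (memXinv q) (Th q) (Xinv q)]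
    simp only [gsign_zero_left, gsign_zero_right, one_smul, rel9 q, rel10 q, rel12 q]
    simp only [smul_tmul, tmul_smul, smul_smul, smul_add, neg_smul, smul_neg, neg_tmul, tmul_neg, smul_zero]
    try (match_scalars <;> (try field_simp) <;> (try ring))
  · -- X⁻¹ · Z = Z · X⁻¹
    simp only [map_add, LinearMap.add_apply]
    rw [hgmul (memXinv q) (memX q) (Xinv q) (Zg q),
        hgmul (memXinv q) (memZg q) (Xinv q) (X q),
        hgmul (memZg q) (memXinv q) (X q) (Xinv q),
        hgmul (memX q) (memXinv q) (Zg q) (Xinv q)]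
    simp only [gsign_zero_left, gsign_zero_right, one_smul, rel9 q, rel10 q, rel13 q]
  · -- X⁻¹ · X = 1
    rw [hgmul (memXinv q) (memX q) (Xinv q) (X q)]
    simp only [gsign_zero_left, one_smul, rel10 q]
  · -- X · X⁻¹ = 1
    rw [hgmul (memX q) (memXinv q) (X q) (Xinv q)]
    simp only [gsign_zero_right, one_smul, rel9 q]
  · -- the coproduct Δ on Ā_q
    letI ringInst : Ring (TP q) := tRing q gmul hgmul
    letI algInst : Algebra ℂ (TP q) :=
      Algebra.ofModule
        (fun r x y => by
          show gmul (r • x) y = r • gmul x y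
          exact LinearMap.congr_fun (map_smul gmul r x) y)
        (fun r x y => by
          show gmul x (r • y) = r • gmul x y
          exact map_smul (gmul x) r y)
    have hmul : ∀ t u : TP q, t * u = gmul t u := fun _ _ => rfl
    have hone : (1 : TP q) = (1 : Abar q) ⊗ₜ[ℂ] (1 : Abar q) := rfl
    have hsm : ∀ (r : ℂ) (a : Abar q ⊗[ℂ] Abar q),
        @HSMul.hSMul ℂ (TP q) (TP q) _ r a = (r • a : Abar q ⊗[ℂ] Abar q) := fun _ _ => rfl
    have hz : (0 : TP q) = ((0 : Abar q ⊗[ℂ] Abar q) : TP q) := rfl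
    have hrel : ∀ ⦃a b : FreeAlgebra ℂ (Fin 5)⦄, Rel q a b →
        (FreeAlgebra.lift ℂ (gfun q)) a = (FreeAlgebra.lift ℂ (gfun q)) b := by
      intro a b r
      cases r with
      | x_xi =>
          simp only [map_mul, map_smul, FreeAlgebra.lift_ι_apply, hmul]; simp only [gfun0, gfun2]
          simp only [map_add, LinearMap.add_apply]
          rw [hgmul (memX q) (memX q) (X q) (Xi q),
              hgmul (memX q) (memXi q) (X q) (X q),
              hgmul (memXi q) (memX q) (X q) (X q),
              hgmul (memX q) (memX q) (Xi q) (X q)]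
          simp only [gsign_zero_left, gsign_zero_right, one_smul, rel1 q]
          simp only [smul_tmul, tmul_smul, smul_smul, smul_add, neg_smul, smul_neg, neg_tmul, tmul_neg, smul_zero, hsm, hz]
          change @Eq (Abar q ⊗[ℂ] Abar q) _ _
          try (match_scalars <;> (try field_simp) <;> (try ring))
      | x_th =>
          simp only [map_mul, map_smul, FreeAlgebra.lift_ι_apply, hmul]; simp only [gfun0, gfun3]
          simp only [map_add, LinearMap.add_apply]
          rw [hgmul (memX q) (memX q) (X q) (Th q),
              hgmul (memX q) (memTh q) (X q) (X q),
              hgmul (memTh q) (memX q) (X q) (X q),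
              hgmul (memX q) (memX q) (Th q) (X q)]
          simp only [gsign_zero_left, gsign_zero_right, one_smul, rel2 q]
          simp only [smul_tmul, tmul_smul, smul_smul, smul_add, neg_smul, smul_neg, neg_tmul, tmul_neg, smul_zero, hsm, hz]
          change @Eq (Abar q ⊗[ℂ] Abar q) _ _
          try (match_scalars <;> (try field_simp) <;> (try ring))
      | x_z =>
          simp only [map_mul, FreeAlgebra.lift_ι_apply, hmul]; simp only [gfun0, gfun4]
          simp only [map_add, LinearMap.add_apply]
          rw [hgmul (memX q) (memX q) (X q) (Zg q),
              hgmul (memX q) (memZg q) (X q) (X q),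
              hgmul (memZg q) (memX q) (X q) (X q),
              hgmul (memX q) (memX q) (Zg q) (X q)]
          simp only [gsign_zero_left, gsign_zero_right, one_smul, rel3 q]
          rfl
      | xi_sq =>
          simp only [map_mul, map_zero, FreeAlgebra.lift_ι_apply, hmul]; simp only [gfun2]
          simp only [map_add, LinearMap.add_apply]
          rw [hgmul (memXi q) (memX q) (X q) (Xi q),
              hgmul (memXi q) (memXi q) (X q) (X q),
              hgmul (memX q) (memX q) (Xi q) (Xi q),
              hgmul (memX q) (memXi q) (Xi q) (X q)]
          simp only [gsign_zero_left, gsign_zero_right, gsign_ss, one_smul,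
            rel1 q, rel4 q, tmul_zero, zero_tmul]
          simp only [smul_tmul, tmul_smul, smul_smul, smul_add, neg_smul, smul_neg, neg_tmul, tmul_neg, smul_zero, hsm, hz]
          change @Eq (Abar q ⊗[ℂ] Abar q) _ _
          try (match_scalars <;> (try field_simp) <;> (try ring))
      | th_sq =>
          simp only [map_mul, map_zero, FreeAlgebra.lift_ι_apply, hmul]; simp only [gfun3]
          simp only [map_add, LinearMap.add_apply]
          rw [hgmul (memTh q) (memX q) (X q) (Th q),
              hgmul (memTh q) (memTh q) (X q) (X q),
              hgmul (memX q) (memX q) (Th q) (Th q),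
              hgmul (memX q) (memTh q) (Th q) (X q)]
          simp only [gsign_zero_left, gsign_zero_right, gsign_tt, one_smul,
            rel2 q, rel5 q, tmul_zero, zero_tmul]
          simp only [smul_tmul, tmul_smul, smul_smul, smul_add, neg_smul, smul_neg, neg_tmul, tmul_neg, smul_zero, hsm, hz]
          change @Eq (Abar q ⊗[ℂ] Abar q) _ _
          try (match_scalars <;> (try field_simp) <;> (try ring))
      | xi_th =>
          simp only [map_mul, FreeAlgebra.lift_ι_apply, hmul]; simp only [gfun2, gfun3]
          simp only [map_add, LinearMap.add_apply]
          rw [hgmul (memXi q) (memX q) (X q) (Th q),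
              hgmul (memXi q) (memTh q) (X q) (X q),
              hgmul (memX q) (memX q) (Xi q) (Th q),
              hgmul (memX q) (memTh q) (Xi q) (X q),
              hgmul (memTh q) (memX q) (X q) (Xi q),
              hgmul (memTh q) (memXi q) (X q) (X q),
              hgmul (memX q) (memX q) (Th q) (Xi q),
              hgmul (memX q) (memXi q) (Th q) (X q)]
          simp only [gsign_zero_left, gsign_zero_right, gsign_st, gsign_ts, one_smul,
            rel1 q, rel2 q, rel6 q]
          simp only [smul_tmul, tmul_smul, smul_smul, smul_add, neg_smul, smul_neg, neg_tmul, tmul_neg, smul_zero, hsm, hz]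
          change @Eq (Abar q ⊗[ℂ] Abar q) _ _
          try (match_scalars <;> (try field_simp) <;> (try ring))
      | xi_z =>
          simp only [map_mul, map_smul, FreeAlgebra.lift_ι_apply, hmul]; simp only [gfun2, gfun4]
          simp only [map_add, LinearMap.add_apply]
          rw [hgmul (memXi q) (memX q) (X q) (Zg q),
              hgmul (memXi q) (memZg q) (X q) (X q),
              hgmul (memX q) (memX q) (Xi q) (Zg q),
              hgmul (memX q) (memZg q) (Xi q) (X q),
              hgmul (memZg q) (memX q) (X q) (Xi q),
              hgmul (memZg q) (memXi q) (X q) (X q),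
              hgmul (memX q) (memX q) (Zg q) (Xi q),
              hgmul (memX q) (memXi q) (Zg q) (X q)]
          simp only [gsign_zero_left, gsign_zero_right, gsign_su, gsign_us, one_smul,
            rel1 q, rel3 q, rel7 q]
          simp only [smul_tmul, tmul_smul, smul_smul, smul_add, neg_smul, smul_neg, neg_tmul, tmul_neg, smul_zero, hsm, hz]
          change @Eq (Abar q ⊗[ℂ] Abar q) _ _
          try (match_scalars <;> (try field_simp) <;> (try ring))
      | th_z =>
          simp only [map_mul, map_smul, FreeAlgebra.lift_ι_apply, hmul]; simp only [gfun3, gfun4]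
          simp only [map_add, LinearMap.add_apply]
          rw [hgmul (memTh q) (memX q) (X q) (Zg q),
              hgmul (memTh q) (memZg q) (X q) (X q),
              hgmul (memX q) (memX q) (Th q) (Zg q),
              hgmul (memX q) (memZg q) (Th q) (X q),
              hgmul (memZg q) (memX q) (X q) (Th q),
              hgmul (memZg q) (memTh q) (X q) (X q),
              hgmul (memX q) (memX q) (Zg q) (Th q),
              hgmul (memX q) (memTh q) (Zg q) (X q)]
          simp only [gsign_zero_left, gsign_zero_right, gsign_tu, gsign_ut, one_smul,
            rel2 q, rel3 q, rel8 q]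
          simp only [smul_tmul, tmul_smul, smul_smul, smul_add, neg_smul, smul_neg, neg_tmul, tmul_neg, smul_zero, hsm, hz]
          change @Eq (Abar q ⊗[ℂ] Abar q) _ _
          try (match_scalars <;> (try field_simp) <;> (try ring))
      | x_xinv =>
          simp only [map_mul, map_one, FreeAlgebra.lift_ι_apply, hmul, hone]; simp only [gfun0, gfun1]
          rw [hgmul (memX q) (memXinv q) (X q) (Xinv q)]
          simp only [gsign_zero_left, one_smul, rel9 q]
          rfl
      | xinv_x =>
          simp only [map_mul, map_one, FreeAlgebra.lift_ι_apply, hmul, hone]; simp only [gfun0, gfun1]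
          rw [hgmul (memXinv q) (memX q) (Xinv q) (X q)]
          simp only [gsign_zero_left, one_smul, rel10 q]
          rfl
      | xinv_xi =>
          simp only [map_mul, map_smul, FreeAlgebra.lift_ι_apply, hmul]; simp only [gfun1, gfun2]
          simp only [map_add, LinearMap.add_apply]
          rw [hgmul (memXinv q) (memX q) (Xinv q) (Xi q),
              hgmul (memXinv q) (memXi q) (Xinv q) (X q),
              hgmul (memXi q) (memXinv q) (X q) (Xinv q),
              hgmul (memX q) (memXinv q) (Xi q) (Xinv q)]
          simp only [gsign_zero_left, gsign_zero_right, one_smul, rel9 q, rel10 q, rel11 q]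
          simp only [smul_tmul, tmul_smul, smul_smul, smul_add, neg_smul, smul_neg, neg_tmul, tmul_neg, smul_zero, hsm, hz]
          change @Eq (Abar q ⊗[ℂ] Abar q) _ _
          try (match_scalars <;> (try field_simp) <;> (try ring))
      | xinv_th =>
          simp only [map_mul, map_smul, FreeAlgebra.lift_ι_apply, hmul]; simp only [gfun1, gfun3]
          simp only [map_add, LinearMap.add_apply]
          rw [hgmul (memXinv q) (memX q) (Xinv q) (Th q),
              hgmul (memXinv q) (memTh q) (Xinv q) (X q),
              hgmul (memTh q) (memXinv q) (X q) (Xinv q),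
              hgmul (memX q) (memXinv q) (Th q) (Xinv q)]
          simp only [gsign_zero_left, gsign_zero_right, one_smul, rel9 q, rel10 q, rel12 q]
          simp only [smul_tmul, tmul_smul, smul_smul, smul_add, neg_smul, smul_neg, neg_tmul, tmul_neg, smul_zero, hsm, hz]
          change @Eq (Abar q ⊗[ℂ] Abar q) _ _
          try (match_scalars <;> (try field_simp) <;> (try ring))
      | xinv_z =>
          simp only [map_mul, FreeAlgebra.lift_ι_apply, hmul]; simp only [gfun1, gfun4]
          simp only [map_add, LinearMap.add_apply]
          rw [hgmul (memXinv q) (memX q) (Xinv q) (Zg q),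
              hgmul (memXinv q) (memZg q) (Xinv q) (X q),
              hgmul (memZg q) (memXinv q) (X q) (Xinv q),
              hgmul (memX q) (memXinv q) (Zg q) (Xinv q)]
          simp only [gsign_zero_left, gsign_zero_right, one_smul, rel9 q, rel10 q, rel13 q]
          rfl
    let F : Abar q →ₐ[ℂ] TP q :=
      RingQuot.liftAlgHom ℂ ⟨FreeAlgebra.lift ℂ (gfun q), hrel⟩
    have hFgen : ∀ i, F (gen q i) = gfun q i := fun i => by
      show RingQuot.liftAlgHom ℂ ⟨FreeAlgebra.lift ℂ (gfun q), hrel⟩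
          (RingQuot.mkAlgHom ℂ (Rel q) (FreeAlgebra.ι ℂ i)) = gfun q i
      rw [RingQuot.liftAlgHom_mkAlgHom_apply, FreeAlgebra.lift_ι_apply]
    exact ⟨{ toFun := fun a => F a,
             map_add' := fun a b => map_add F a b,
             map_smul' := fun c a => map_smul F c a },
           map_one F, fun a b => map_mul F a b, hFgen 0, hFgen 1, hFgen 2, hFgen 3, hFgen 4⟩
end

section
/- Let B be an associative ℂ-algebra with a ℂ-linear map d : B → B and elements x, ξ, θ, z of 'form-degree 0' and dx = d(x), dξ = d(ξ), dθ = d(θ), dz = d(z), such that d² = 0 on these elements, d satisfies d(ab) = (da)b + a(db) whenever a has form-degree 0 and d(αb) = (dα)b − α(db) whenever α has form-degree 1, and the sixteen commutation rules hold: x dx = dx x; x dξ = q dξ x; x dθ = q dθ x; x dz = dz x; ξ dx = q⁻¹ dx ξ; ξ dξ = −dξ ξ; ξ dθ = dθ ξ; ξ dz = −q⁻¹ dz ξ; θ dx = q⁻¹ dx θ; θ dξ = dξ θ; θ dθ = −dθ θ; θ dz = −q⁻¹ dz θ; z dx = dx z; z dξ = −q dξ z; z dθ = −q dθ z; z dz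 = dz z. Then the differentials satisfy: dx dξ = −q dξ dx; dx dθ = −q dθ dx; dx dz = −dz dx; dξ dθ = −dθ dξ; dξ dz = q⁻¹ dz dξ; dθ dz = q⁻¹ dz dθ; and moreover (dx)² = 0 and (dz)² = 0. -/
/-!
STATEMENT 14: Let `B` be an associative `ℂ`-algebra with a `ℂ`-linear map `d : B → B` and
elements `x, ξ, θ, z` of form-degree 0 and `dx = d x`, `dξ = d ξ`, `dθ = d θ`, `dz = d z`,
such that `d² = 0` on these elements, `d` satisfies the Leibniz rule `d(ab) = (da)b + a(db)`
whenever `a` has form-degree 0 (in particular for `a ∈ {x, ξ, θ, z}`) and the graded Leibniz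
rule `d(αb) = (dα)b − α(db)` whenever `α` has form-degree 1 (in particular for
`α ∈ {dx, dξ, dθ, dz}`), and the sixteen commutation rules hold.  Then the differentials
satisfy `dx dξ = −q dξ dx`, `dx dθ = −q dθ dx`, `dx dz = −dz dx`, `dξ dθ = −dθ dξ`,
`dξ dz = q⁻¹ dz dξ`, `dθ dz = q⁻¹ dz dθ`, and moreover `(dx)² = 0` and `(dz)² = 0`.
-/

theorem statement14 (B : Type*) [Ring B] [Algebra ℂ B] (q : ℂ) (hq : q ≠ 0)
    (d : B →ₗ[ℂ] B) (x ξ θ z : B)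
    (hd2 : ∀ u ∈ ({x, ξ, θ, z} : Set B), d (d u) = 0)
    (hLeib₀ : ∀ u ∈ ({x, ξ, θ, z} : Set B), ∀ b : B, d (u * b) = d u * b + u * d b)
    (hLeib₁ : ∀ u ∈ ({x, ξ, θ, z} : Set B), ∀ b : B,
      d (d u * b) = d (d u) * b - d u * d b)
    (h₁ : x * d x = d x * x)
    (h₂ : x * d ξ = q • (d ξ * x))
    (h₃ : x * d θ = q • (d θ * x))
    (h₄ : x * d z = d z * x)
    (h₅ : ξ * d x = q⁻¹ • (d x * ξ))
    (h₆ : ξ * d ξ = -(d ξ * ξ))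
    (h₇ : ξ * d θ = d θ * ξ)
    (h₈ : ξ * d z = (-q⁻¹) • (d z * ξ))
    (h₉ : θ * d x = q⁻¹ • (d x * θ))
    (h₁₀ : θ * d ξ = d ξ * θ)
    (h₁₁ : θ * d θ = -(d θ * θ))
    (h₁₂ : θ * d z = (-q⁻¹) • (d z * θ))
    (h₁₃ : z * d x = d x * z)
    (h₁₄ : z * d ξ = (-q) • (d ξ * z))
    (h₁₅ : z * d θ = (-q) • (d θ * z))
    (h₁₆ : z * d z = d z * z) :
    d x * d ξ = (-q) • (d ξ * d x) ∧
    d x * d θ = (-q) • (d θ * d x) ∧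
    d x * d z = -(d z * d x) ∧
    d ξ * d θ = -(d θ * d ξ) ∧
    d ξ * d z = q⁻¹ • (d z * d ξ) ∧
    d θ * d z = q⁻¹ • (d z * d θ) ∧
    d x * d x = 0 ∧
    d z * d z = 0 := by

  have hx : x ∈ ({x, ξ, θ, z} : Set B) := by simp
  have hxi : ξ ∈ ({x, ξ, θ, z} : Set B) := by simp
  have hth : θ ∈ ({x, ξ, θ, z} : Set B) := by simp
  have hz : z ∈ ({x, ξ, θ, z} : Set B) := by simp
  have key : ∀ u ∈ ({x, ξ, θ, z} : Set B), ∀ v ∈ ({x, ξ, θ, z} : Set B), ∀ c : ℂ,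
      u * d v = c • (d v * u) → d u * d v = (-c) • (d v * d u) := by
    intro u hu v hv c h
    have e1 : d (u * d v) = d u * d v := by
      rw [hLeib₀ u hu, hd2 v hv, mul_zero, add_zero]
    have e2 : d (c • (d v * u)) = (-c) • (d v * d u) := by
      rw [map_smul, hLeib₁ v hv, hd2 v hv, zero_mul, zero_sub, smul_neg, neg_smul]
    rw [← e1, h, e2]
  have half : ∀ a : B, a = -a → a = 0 := by
    intro a ha
    have : (2 : ℂ) • a = 0 := by
      rw [two_smul]
      nth_rewrite 1 [ha]
      exact neg_add_cancel a
    have h2 : (2 : ℂ) ≠ 0 := by norm_num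
    simpa [h2] using this
  refine ⟨key x hx ξ hxi q h₂, key x hx θ hth q h₃, ?_, ?_, ?_, ?_, ?_, ?_⟩
  · have := key x hx z hz 1 (by rw [one_smul]; exact h₄)
    simpa using this
  · have := key ξ hxi θ hth 1 (by rw [one_smul]; exact h₇)
    simpa using this
  · have := key ξ hxi z hz (-q⁻¹) h₈
    simpa using this
  · have := key θ hth z hz (-q⁻¹) h₁₂
    simpa using this
  · have := key x hx x hx 1 (by rw [one_smul]; exact h₁)
    exact half _ (by simpa using this)
  · have := key z hz z hz 1 (by rw [one_smul]; exact h₁₆)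
    exact half _ (by simpa using this)
end

section
/- The monomials x^m ξ^α θ^β z^n with m, n ∈ ℕ and α, β ∈ {0,1} form a ℂ-vector-space basis of the double-graded quantum superplane algebra A_q. -/
/-!
STATEMENT 15: The monomials `x^m ξ^α θ^β z^n` with `m, n ∈ ℕ` and `α, β ∈ {0,1}` form a
`ℂ`-vector-space basis of the double-graded quantum superplane algebra `A_q`.
-/
open scoped TensorProduct

namespace S15
open DGQS

variable (q : ℂ)

/-- The PBW monomial. -/
noncomputable def mono (p : ℕ × Bool × Bool × ℕ) : Aq q :=
  X q ^ p.1 * Xi q ^ p.2.1.toNat * Th q ^ p.2.2.1.toNat * Zg q ^ p.2.2.2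

private lemma rel {x y : FreeAlgebra ℂ (Fin 4)} (h : Rel q x y) :
    RingQuot.mkAlgHom ℂ (Rel q) x = RingQuot.mkAlgHom ℂ (Rel q) y :=
  RingQuot.mkAlgHom_rel ℂ h

lemma X_Xi : X q * Xi q = q • (Xi q * X q) := by
  simpa [X, Xi, gen, map_mul] using rel q Rel.x_xi

lemma X_Th : X q * Th q = q • (Th q * X q) := by
  simpa [X, Th, gen, map_mul] using rel q Rel.x_th

lemma X_Z : X q * Zg q = Zg q * X q := by
  simpa [X, Zg, gen, map_mul] using rel q Rel.x_z

lemma Xi_sq : Xi q * Xi q = 0 := by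
  simpa [Xi, gen, map_mul] using rel q Rel.xi_sq

lemma Th_sq : Th q * Th q = 0 := by
  simpa [Th, gen, map_mul] using rel q Rel.th_sq

lemma Xi_Th : Xi q * Th q = Th q * Xi q := by
  simpa [Xi, Th, gen, map_mul] using rel q Rel.xi_th

lemma Xi_Z : Xi q * Zg q = (-q⁻¹) • (Zg q * Xi q) := by
  simpa only [Xi, Zg, gen, map_mul, map_smul] using rel q Rel.xi_z

lemma Th_Z : Th q * Zg q = (-q⁻¹) • (Zg q * Th q) := by
  simpa only [Th, Zg, gen, map_mul, map_smul] using rel q Rel.th_z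

variable {q}

lemma Xi_X (hq : q ≠ 0) : Xi q * X q = q⁻¹ • (X q * Xi q) := by
  rw [X_Xi, smul_smul, inv_mul_cancel₀ hq, one_smul]

lemma Th_X (hq : q ≠ 0) : Th q * X q = q⁻¹ • (X q * Th q) := by
  rw [X_Th, smul_smul, inv_mul_cancel₀ hq, one_smul]

lemma Z_Xi (hq : q ≠ 0) : Zg q * Xi q = (-q) • (Xi q * Zg q) := by
  rw [Xi_Z, smul_smul, neg_mul_neg, mul_inv_cancel₀ hq, one_smul]

lemma Z_Th (hq : q ≠ 0) : Zg q * Th q = (-q) • (Th q * Zg q) := by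
  rw [Th_Z, smul_smul, neg_mul_neg, mul_inv_cancel₀ hq, one_smul]

lemma swap_pow {A : Type*} [Semiring A] [Algebra ℂ A] {a b : A} {c : ℂ}
    (h : a * b = c • (b * a)) : ∀ m : ℕ, a * b ^ m = c ^ m • (b ^ m * a)
  | 0 => by simp
  | m + 1 => by
    rw [pow_succ, ← mul_assoc, swap_pow h m, smul_mul_assoc, mul_assoc, h,
      mul_smul_comm, smul_smul, ← pow_succ, ← mul_assoc]

lemma cZX : Commute (Zg q) (X q) := (X_Z q).symm
lemma cThXi : Commute (Th q) (Xi q) := (Xi_Th q).symm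

/-- The span of the PBW monomials. -/
noncomputable def S : Submodule ℂ (Aq q) := Submodule.span ℂ (Set.range (mono q))

lemma mono_mem (p : ℕ × Bool × Bool × ℕ) : mono q p ∈ (S : Submodule ℂ (Aq q)) :=
  Submodule.subset_span ⟨p, rfl⟩

lemma X_mul_mono (p : ℕ × Bool × Bool × ℕ) : X q * mono q p ∈ (S : Submodule ℂ (Aq q)) := by
  obtain ⟨m, a, b, n⟩ := p
  have : X q * mono q (m, a, b, n) = mono q (m + 1, a, b, n) := by
    simp only [mono, pow_succ', mul_assoc]
  rw [this]; exact mono_mem _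

lemma Xi_mul_mono (hq : q ≠ 0) (p : ℕ × Bool × Bool × ℕ) :
    Xi q * mono q p ∈ (S : Submodule ℂ (Aq q)) := by
  obtain ⟨m, a, b, n⟩ := p
  cases a with
  | false =>
    have : Xi q * mono q (m, false, b, n) = (q⁻¹) ^ m • mono q (m, true, b, n) := by
      simp only [mono, Bool.toNat_false, Bool.toNat_true, pow_zero, pow_one, mul_one]
      rw [← mul_assoc, ← mul_assoc, swap_pow (Xi_X hq) m, smul_mul_assoc, smul_mul_assoc]
    rw [this]; exact Submodule.smul_mem _ _ (mono_mem _)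
  | true =>
    have : Xi q * mono q (m, true, b, n) = 0 := by
      simp only [mono, Bool.toNat_true, pow_one]
      rw [← mul_assoc, ← mul_assoc, ← mul_assoc, swap_pow (Xi_X hq) m, smul_mul_assoc,
        smul_mul_assoc, smul_mul_assoc, mul_assoc (X q ^ m) (Xi q) (Xi q), Xi_sq, mul_zero,
        zero_mul, zero_mul, smul_zero]
    rw [this]; exact Submodule.zero_mem _

lemma Th_mul_mono (hq : q ≠ 0) (p : ℕ × Bool × Bool × ℕ) :
    Th q * mono q p ∈ (S : Submodule ℂ (Aq q)) := by
  obtain ⟨m, a, b, n⟩ := p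
  cases b with
  | false =>
    have : Th q * mono q (m, a, false, n) = (q⁻¹) ^ m • mono q (m, a, true, n) := by
      simp only [mono, Bool.toNat_false, Bool.toNat_true, pow_zero, pow_one, mul_one]
      rw [← mul_assoc, ← mul_assoc, swap_pow (Th_X hq) m, smul_mul_assoc, smul_mul_assoc,
        mul_assoc (X q ^ m) (Th q) (Xi q ^ a.toNat), (cThXi.pow_right a.toNat).eq,
        ← mul_assoc]
    rw [this]; exact Submodule.smul_mem _ _ (mono_mem _)
  | true =>
    have : Th q * mono q (m, a, true, n) = 0 := by
      simp only [mono, Bool.toNat_true, pow_one]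
      rw [← mul_assoc, ← mul_assoc, ← mul_assoc, swap_pow (Th_X hq) m, smul_mul_assoc,
        smul_mul_assoc, smul_mul_assoc, mul_assoc (X q ^ m) (Th q) (Xi q ^ a.toNat),
        (cThXi.pow_right a.toNat).eq, ← mul_assoc,
        mul_assoc (X q ^ m * Xi q ^ a.toNat) (Th q) (Th q), Th_sq, mul_zero, zero_mul,
        smul_zero]
    rw [this]; exact Submodule.zero_mem _

lemma Z_mul_mono (hq : q ≠ 0) (p : ℕ × Bool × Bool × ℕ) :
    Zg q * mono q p ∈ (S : Submodule ℂ (Aq q)) := by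
  obtain ⟨m, a, b, n⟩ := p
  have : Zg q * mono q (m, a, b, n)
      = ((-q) ^ a.toNat * (-q) ^ b.toNat) • mono q (m, a, b, n + 1) := by
    simp only [mono]
    rw [← mul_assoc, ← mul_assoc, ← mul_assoc, (cZX.pow_right m).eq,
      mul_assoc (X q ^ m) (Zg q) (Xi q ^ a.toNat), swap_pow (Z_Xi hq) a.toNat,
      mul_smul_comm, ← mul_assoc, smul_mul_assoc, smul_mul_assoc,
      mul_assoc (X q ^ m * Xi q ^ a.toNat) (Zg q) (Th q ^ b.toNat),
      swap_pow (Z_Th hq) b.toNat, mul_smul_comm, ← mul_assoc, smul_mul_assoc,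
      smul_smul, mul_assoc _ (Zg q) (Zg q ^ n), ← pow_succ']
  rw [this]; exact Submodule.smul_mem _ _ (mono_mem _)

end S15

namespace S15
open DGQS
variable {q : ℂ}

lemma one_mem_S : (1 : Aq q) ∈ (S : Submodule ℂ (Aq q)) := by
  have : mono q (0, false, false, 0) = 1 := by simp [mono]
  rw [← this]; exact mono_mem _

lemma gen_mul_mem (hq : q ≠ 0) (i : Fin 4) {y : Aq q} (hy : y ∈ (S : Submodule ℂ (Aq q))) :
    gen q i * y ∈ (S : Submodule ℂ (Aq q)) := by
  induction hy using Submodule.span_induction with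
  | mem a ha =>
      obtain ⟨p, rfl⟩ := ha
      fin_cases i
      · exact X_mul_mono p
      · exact Xi_mul_mono hq p
      · exact Th_mul_mono hq p
      · exact Z_mul_mono hq p
  | zero => simpa using Submodule.zero_mem _
  | add u v _ _ hu hv => rw [mul_add]; exact add_mem hu hv
  | smul c u _ hu => rw [mul_smul_comm]; exact Submodule.smul_mem _ _ hu

lemma adjoin_top : Algebra.adjoin ℂ (Set.range (gen q)) = ⊤ := by
  rw [eq_top_iff]
  rintro a -
  obtain ⟨f, rfl⟩ := RingQuot.mkAlgHom_surjective ℂ (Rel q) a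
  induction f using FreeAlgebra.induction with
  | grade0 r => rw [AlgHom.commutes]; exact Subalgebra.algebraMap_mem _ r
  | grade1 i => exact Algebra.subset_adjoin (R := ℂ) ⟨i, rfl⟩
  | mul x y hx hy => rw [map_mul]; exact mul_mem hx hy
  | add x y hx hy => rw [map_add]; exact add_mem hx hy

lemma S_top (hq : q ≠ 0) : (S : Submodule ℂ (Aq q)) = ⊤ := by
  rw [eq_top_iff]
  intro a _
  have ha : a ∈ Submodule.span ℂ
      ((Submonoid.closure (Set.range (gen q)) : Submonoid (Aq q)) : Set (Aq q)) := by
    rw [← Algebra.adjoin_eq_span]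
    show a ∈ Subalgebra.toSubmodule (Algebra.adjoin ℂ (Set.range (gen q)))
    rw [adjoin_top]
    exact Algebra.mem_top (R := ℂ)
  refine Submodule.span_le.mpr (fun c hc => ?_) ha
  refine Submonoid.closure_induction_left (motive := fun m _ => m ∈ (S : Submodule ℂ (Aq q)))
    one_mem_S ?_ hc
  rintro x ⟨i, rfl⟩ y hy h
  exact gen_mul_mem hq i h

/-! ### The PBW representation -/

abbrev Idx := ℕ × Bool × Bool × ℕ
abbrev V : Type := Idx →₀ ℂ

noncomputable def op (f : Idx → ℂ × Idx) : Module.End ℂ V :=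
  Finsupp.lsum ℂ fun p => (f p).1 • Finsupp.lsingle (f p).2

lemma op_single (f : Idx → ℂ × Idx) (p : Idx) (c : ℂ) :
    op f (Finsupp.single p c) = (f p).1 • Finsupp.single (f p).2 c := by
  simp [op]

noncomputable def TX : Module.End ℂ V := op fun p => (1, (p.1 + 1, p.2))
noncomputable def TXi (q : ℂ) : Module.End ℂ V :=
  op fun p => if p.2.1 then (0, p) else ((q⁻¹) ^ p.1, (p.1, true, p.2.2))
noncomputable def TTh (q : ℂ) : Module.End ℂ V :=
  op fun p => if p.2.2.1 then (0, p) else ((q⁻¹) ^ p.1, (p.1, p.2.1, true, p.2.2.2))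
noncomputable def TZ (q : ℂ) : Module.End ℂ V :=
  op fun p => ((-q) ^ (p.2.1.toNat + p.2.2.1.toNat), (p.1, p.2.1, p.2.2.1, p.2.2.2 + 1))

lemma R1 (hq : q ≠ 0) : TX * TXi q = q • (TXi q * TX) := by
  apply Finsupp.lhom_ext
  rintro ⟨m, a, b, n⟩ c
  cases a <;>
    simp only [TX, TXi, Module.End.mul_apply, LinearMap.smul_apply, op_single, map_smul,
      smul_smul, Bool.false_eq_true, Bool.true_eq_false, if_false, if_true, reduceIte,
      smul_zero, map_zero, LinearMap.zero_apply, zero_smul, one_smul, one_mul, mul_one,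
      Bool.toNat_false, Bool.toNat_true, LinearMap.neg_apply, Finsupp.smul_single,
      ← Finsupp.single_neg, smul_eq_mul, neg_zero] <;>
    first
      | rfl
      | (congr 1; simp [hq]; field_simp; ring)
      | (congr 1; field_simp; ring)
      | (congr 1; field_simp)
      | congr 1

lemma R2 (hq : q ≠ 0) : TX * TTh q = q • (TTh q * TX) := by
  apply Finsupp.lhom_ext
  rintro ⟨m, a, b, n⟩ c
  cases b <;>
    simp only [TX, TTh, Module.End.mul_apply, LinearMap.smul_apply, op_single, map_smul,
      smul_smul, Bool.false_eq_true, Bool.true_eq_false, if_false, if_true, reduceIte,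
      smul_zero, map_zero, LinearMap.zero_apply, zero_smul, one_smul, one_mul, mul_one,
      Bool.toNat_false, Bool.toNat_true, LinearMap.neg_apply, Finsupp.smul_single,
      ← Finsupp.single_neg, smul_eq_mul, neg_zero] <;>
    first
      | rfl
      | (congr 1; simp [hq]; field_simp; ring)
      | (congr 1; field_simp; ring)
      | (congr 1; field_simp)
      | congr 1

lemma R3 : TX * TZ q = TZ q * TX := by
  apply Finsupp.lhom_ext
  rintro ⟨m, a, b, n⟩ c
  cases a <;> cases b <;>
    simp only [TX, TZ, Module.End.mul_apply, LinearMap.smul_apply, op_single, map_smul,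
      smul_smul, Bool.false_eq_true, Bool.true_eq_false, if_false, if_true, reduceIte,
      smul_zero, map_zero, LinearMap.zero_apply, zero_smul, one_smul, one_mul, mul_one,
      Bool.toNat_false, Bool.toNat_true, LinearMap.neg_apply, Finsupp.smul_single,
      ← Finsupp.single_neg, smul_eq_mul, neg_zero] <;>
    first
      | rfl
      | (congr 1; field_simp; ring)
      | (congr 1; field_simp)
      | congr 1

lemma R4 : TXi q * TXi q = 0 := by
  apply Finsupp.lhom_ext
  rintro ⟨m, a, b, n⟩ c
  cases a <;>
    simp only [TXi, Module.End.mul_apply, LinearMap.smul_apply, op_single, map_smul,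
      smul_smul, Bool.false_eq_true, Bool.true_eq_false, if_false, if_true, reduceIte,
      smul_zero, map_zero, LinearMap.zero_apply, zero_smul, one_smul, one_mul, mul_one,
      Bool.toNat_false, Bool.toNat_true, LinearMap.neg_apply, Finsupp.smul_single,
      ← Finsupp.single_neg, smul_eq_mul, neg_zero] <;>
    first
      | rfl
      | (congr 1; field_simp; ring)
      | (congr 1; field_simp)
      | congr 1

lemma R5 : TTh q * TTh q = 0 := by
  apply Finsupp.lhom_ext
  rintro ⟨m, a, b, n⟩ c
  cases b <;>
    simp only [TTh, Module.End.mul_apply, LinearMap.smul_apply, op_single, map_smul,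
      smul_smul, Bool.false_eq_true, Bool.true_eq_false, if_false, if_true, reduceIte,
      smul_zero, map_zero, LinearMap.zero_apply, zero_smul, one_smul, one_mul, mul_one,
      Bool.toNat_false, Bool.toNat_true, LinearMap.neg_apply, Finsupp.smul_single,
      ← Finsupp.single_neg, smul_eq_mul, neg_zero] <;>
    first
      | rfl
      | (congr 1; field_simp; ring)
      | (congr 1; field_simp)
      | congr 1

lemma R6 : TXi q * TTh q = TTh q * TXi q := by
  apply Finsupp.lhom_ext
  rintro ⟨m, a, b, n⟩ c
  cases a <;> cases b <;>
    simp only [TXi, TTh, Module.End.mul_apply, LinearMap.smul_apply, op_single, map_smul,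
      smul_smul, Bool.false_eq_true, Bool.true_eq_false, if_false, if_true, reduceIte,
      smul_zero, map_zero, LinearMap.zero_apply, zero_smul, one_smul, one_mul, mul_one,
      Bool.toNat_false, Bool.toNat_true, LinearMap.neg_apply, Finsupp.smul_single,
      ← Finsupp.single_neg, smul_eq_mul, neg_zero] <;>
    first
      | rfl
      | (congr 1; field_simp; ring)
      | (congr 1; field_simp)
      | congr 1

lemma R7 (hq : q ≠ 0) : TXi q * TZ q = -(q⁻¹ • (TZ q * TXi q)) := by
  apply Finsupp.lhom_ext
  rintro ⟨m, a, b, n⟩ c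
  cases a <;> cases b <;>
    simp only [TXi, TZ, Module.End.mul_apply, LinearMap.smul_apply, op_single, map_smul,
      smul_smul, Bool.false_eq_true, Bool.true_eq_false, if_false, if_true, reduceIte,
      smul_zero, map_zero, LinearMap.zero_apply, zero_smul, one_smul, one_mul, mul_one,
      Bool.toNat_false, Bool.toNat_true, LinearMap.neg_apply, Finsupp.smul_single,
      ← Finsupp.single_neg, smul_eq_mul, neg_zero] <;>
    first
      | rfl
      | (congr 1; field_simp; ring)
      | (congr 1; field_simp)
      | congr 1

lemma R8 (hq : q ≠ 0) : TTh q * TZ q = -(q⁻¹ • (TZ q * TTh q)) := by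
  apply Finsupp.lhom_ext
  rintro ⟨m, a, b, n⟩ c
  cases a <;> cases b <;>
    simp only [TTh, TZ, Module.End.mul_apply, LinearMap.smul_apply, op_single, map_smul,
      smul_smul, Bool.false_eq_true, Bool.true_eq_false, if_false, if_true, reduceIte,
      smul_zero, map_zero, LinearMap.zero_apply, zero_smul, one_smul, one_mul, mul_one,
      Bool.toNat_false, Bool.toNat_true, LinearMap.neg_apply, Finsupp.smul_single,
      ← Finsupp.single_neg, smul_eq_mul, neg_zero] <;>
    first
      | rfl
      | (congr 1; field_simp; ring)
      | (congr 1; field_simp)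
      | congr 1

noncomputable def rep (hq : q ≠ 0) : Aq q →ₐ[ℂ] Module.End ℂ V :=
  RingQuot.liftAlgHom ℂ ⟨FreeAlgebra.lift ℂ ![TX, TXi q, TTh q, TZ q], by
    intro x y h
    induction h with
    | x_xi => simpa [map_mul] using R1 hq
    | x_th => simpa [map_mul] using R2 hq
    | x_z => simpa [map_mul] using R3
    | xi_sq => simpa [map_mul] using R4
    | th_sq => simpa [map_mul] using R5
    | xi_th => simpa [map_mul] using R6
    | xi_z => simpa [map_mul] using R7 hq
    | th_z => simpa [map_mul] using R8 hq⟩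

lemma rep_gen (hq : q ≠ 0) (i : Fin 4) :
    rep hq (gen q i) = ![TX, TXi q, TTh q, TZ q] i := by
  rw [gen, rep, RingQuot.liftAlgHom_mkAlgHom_apply, FreeAlgebra.lift_ι_apply]

noncomputable def e0 : V := Finsupp.single (0, false, false, 0) 1

lemma TX_pow (j : ℕ) (p : Idx) :
    (TX ^ j) (Finsupp.single p 1) = Finsupp.single (p.1 + j, p.2) 1 := by
  induction j with
  | zero => simp
  | succ k ih =>
      rw [pow_succ', Module.End.mul_apply, ih]
      simp [TX, op_single, add_assoc]

lemma TZ_pow (j n : ℕ) :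
    (TZ q ^ j) (Finsupp.single ((0 : ℕ), false, false, n) 1)
      = Finsupp.single ((0 : ℕ), false, false, n + j) 1 := by
  induction j with
  | zero => simp
  | succ k ih =>
      rw [pow_succ', Module.End.mul_apply, ih]
      simp [TZ, op_single, add_assoc]

lemma rep_mono (hq : q ≠ 0) (p : Idx) : rep hq (mono q p) e0 = Finsupp.single p 1 := by
  obtain ⟨m, a, b, n⟩ := p
  have hX : rep hq (X q) = TX := by simpa [X] using rep_gen hq 0
  have hXi : rep hq (Xi q) = TXi q := by simpa [Xi] using rep_gen hq 1
  have hTh : rep hq (Th q) = TTh q := by simpa [Th] using rep_gen hq 2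
  have hZ : rep hq (Zg q) = TZ q := by simpa [Zg] using rep_gen hq 3
  rw [mono, map_mul, map_mul, map_mul, map_pow, map_pow, map_pow, map_pow, hX, hXi, hTh, hZ]
  simp only [Module.End.mul_apply]
  rw [show e0 = Finsupp.single ((0:ℕ), false, false, 0) 1 from rfl, TZ_pow]
  cases a <;> cases b <;>
    simp [TXi, TTh, op_single, TX_pow]

end S15



open DGQS in
/-- The PBW monomials `x^m ξ^α θ^β z^n` are linearly independent and span `A_q`,
i.e. they form a `ℂ`-vector-space basis of `A_q`. -/
theorem statement15 (q : ℂ) (hq : q ≠ 0) (hqroot : ∀ n : ℕ, 0 < n → q ^ n ≠ 1) :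
    LinearIndependent ℂ
      (fun p : ℕ × Bool × Bool × ℕ =>
        X q ^ p.1 * Xi q ^ p.2.1.toNat * Th q ^ p.2.2.1.toNat * Zg q ^ p.2.2.2) ∧
    Submodule.span ℂ
      (Set.range (fun p : ℕ × Bool × Bool × ℕ =>
        X q ^ p.1 * Xi q ^ p.2.1.toNat * Th q ^ p.2.2.1.toNat * Zg q ^ p.2.2.2)) = ⊤ := by
  constructor
  · let ev : Aq q →ₗ[ℂ] S15.V :=
      { toFun := fun a => S15.rep hq a S15.e0
        map_add' := fun a b => by simp
        map_smul' := fun c a => by simp }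
    refine LinearIndependent.of_comp ev ?_
    have h : (⇑ev ∘ fun p : ℕ × Bool × Bool × ℕ =>
        X q ^ p.1 * Xi q ^ p.2.1.toNat * Th q ^ p.2.2.1.toNat * Zg q ^ p.2.2.2)
        = fun p : ℕ × Bool × Bool × ℕ => Finsupp.single p (1 : ℂ) := by
      funext p
      exact S15.rep_mono hq p
    rw [h]
    have hb := (Finsupp.basisSingleOne (R := ℂ) (ι := ℕ × Bool × Bool × ℕ)).linearIndependent
    rwa [Finsupp.coe_basisSingleOne] at hb
  · exact S15.S_top (q := q) hq
end
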